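/- arXiv:1212.5942 — 2 statements merged into one kernel-verified Lean document; each statement's English description precedes it below -/
import Mathlib

section
/- Let H be a real Hilbert space, let m ≥ 1, for every i ∈ {1,…,m} let A_i : H → 2^H be maximally monotone, let B : H → H be β-cocoercive for some β > 0, and assume there exists x ∈ H with 0 ∈ Σ_{i=1}^m A_i x + Bx. Let (ω_i)_{1≤i≤m} be real numbers in (0,1) with Σ_{i=1}^m ω_i = 1, let γ ∈ (0, 2β), set α = max{2/3, 2γ/(γ+2β)}, let (λ_n) be a sequence in (0, 1/α), let (a_n) and (b_{i,n}) (i = 1,…,m) be sequences in H with Σ_n λ_n(1−αλ_n) = +∞ and Σ_n λ_n(‖a_n‖ + ‖b_{i,n}‖) < +∞ for every i. Let (z_{i,0})_{1≤i≤m} ∈ H^m and for every n ∈ ℕ set x_n = Σ_{i=1}^m ω_i z_{i,n}, and for i = 1,…,m: s_{i,n} = 2x_n − z_{i,n} − γ(Bx_n + a_n), p_{i,n} = J_{(γ/ω_i) A_i} s_{i,n} + b_{i,n}, z_{i,n+1} = z_{i,n} + λ_n(p_{i,n} − x_n). Then there exists x̄ ∈ H with 0 ∈ Σ_{i=1}^m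 A_i x̄ + Bx̄ such that x_n converges weakly to x̄, Bx_n converges strongly to Bx̄, and x_{n+1} − x_n → 0 strongly. -/
set_option maxHeartbeats 1000000
open Filter Topology
open scoped RealInnerProductSpace Pointwise

variable {H : Type*} [NormedAddCommGroup H] [InnerProductSpace ℝ H] [CompleteSpace H]

/-- A set-valued operator `A : H → 2^H` is monotone. -/
def IsMonotoneOp (A : H → Set H) : Prop :=
  ∀ x y u v : H, u ∈ A x → v ∈ A y → 0 ≤ ⟪x - y, u - v⟫

/-- A set-valued operator is maximally monotone: it is monotone and its graph is not
properly contained in the graph of any monotone operator. -/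
def IsMaxMonotoneOp (A : H → Set H) : Prop :=
  IsMonotoneOp A ∧ ∀ x u : H, (∀ y v : H, v ∈ A y → 0 ≤ ⟪x - y, u - v⟫) → u ∈ A x

/-- The normal cone to a closed vector subspace `V`: it maps `x ∈ V` to `Vᗮ`
and `x ∉ V` to `∅`. -/
def normalConeSub (V : Submodule ℝ H) : H → Set H :=
  fun x => {w | x ∈ V ∧ w ∈ Vᗮ}

/-- `z n` converges weakly to `w`. -/
def WeakLim (z : ℕ → H) (w : H) : Prop :=
  ∀ y : H, Tendsto (fun n => ⟪z n, y⟫) atTop (nhds ⟪w, y⟫)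

/-- The partial inverse of a set-valued operator `M` with respect to a subspace with
orthogonal projection `P` (so that `P_{V⊥} = id - P`):
`y ∈ M_V x ↔ P_V y + P_{V⊥} x ∈ M (P_V x + P_{V⊥} y)`. -/
def partialInvOp (P : H → H) (M : H → Set H) : H → Set H :=
  fun x => {y | P y + (x - P x) ∈ M (P x + (y - P y))}


section seqs

/-- A nonnegative almost-decreasing sequence converges. -/
lemma aux_tendsto_of_quasi (a ε : ℕ → ℝ) (ha : ∀ n, 0 ≤ a n) (hε : ∀ n, 0 ≤ ε n)
    (hs : Summable ε) (hrec : ∀ n, a (n + 1) ≤ a n + ε n) :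
    ∃ l, Tendsto a atTop (nhds l) := by
  set b : ℕ → ℝ := fun n => a n - ∑ k ∈ Finset.range n, ε k with hb
  have hanti : Antitone b := by
    apply antitone_nat_of_succ_le
    intro n
    have := hrec n
    simp only [hb, Finset.sum_range_succ]
    linarith
  have hbdd : BddBelow (Set.range b) := by
    refine ⟨-(∑' k, ε k), ?_⟩
    rintro x ⟨n, rfl⟩
    have h1 : ∑ k ∈ Finset.range n, ε k ≤ ∑' k, ε k :=
      Summable.sum_le_tsum (Finset.range n) (fun k _ => hε k) hs
    have := ha n
    simp only [hb]
    linarith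
  have h1 : Tendsto b atTop (nhds (⨅ n, b n)) := tendsto_atTop_ciInf hanti hbdd
  have h2 : Tendsto (fun n => ∑ k ∈ Finset.range n, ε k) atTop (nhds (∑' k, ε k)) :=
    hs.hasSum.tendsto_sum_nat
  refine ⟨(⨅ n, b n) + ∑' k, ε k, ?_⟩
  have : a = fun n => b n + ∑ k ∈ Finset.range n, ε k := by
    funext n; simp [hb]
  rw [this]
  exact h1.add h2

lemma aux_limit_zero (c μ' : ℕ → ℝ) (L : ℝ) (h0 : ∀ n, 0 ≤ c n)
    (hc : Tendsto c atTop (nhds L))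
    (hdiv : ¬ Summable μ') (hμ' : ∀ n, 0 ≤ μ' n)
    (hsum : Summable (fun n => μ' n * c n ^ 2)) : L = 0 := by
  by_contra hL
  have hL0 : 0 ≤ L := le_of_tendsto_of_tendsto' tendsto_const_nhds hc (fun n => h0 n)
  have hLpos : 0 < L := lt_of_le_of_ne hL0 (Ne.symm hL)
  have hev : ∀ᶠ n in atTop, L / 2 ≤ c n := by
    have := hc (Ioi_mem_nhds (show L / 2 < L by linarith))
    filter_upwards [this] with n hn
    exact le_of_lt hn
  apply hdiv
  have key : ∀ᶠ n in atTop, μ' n ≤ (4 / L ^ 2) * (μ' n * c n ^ 2) := by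
    filter_upwards [hev] with n hn
    have h1 : (L / 2) ^ 2 ≤ c n ^ 2 := by
      apply sq_le_sq' <;> nlinarith
    have := hμ' n
    have hL2 : 0 < L ^ 2 := by positivity
    rw [div_mul_eq_mul_div, le_div_iff₀ hL2]
    nlinarith
  obtain ⟨N, hN⟩ := eventually_atTop.mp key
  have hsum2 : Summable (fun n => (4 / L ^ 2) * (μ' n * c n ^ 2)) := hsum.mul_left _
  have : Summable (fun n => μ' (n + N)) := by
    apply Summable.of_nonneg_of_le (fun n => hμ' _) (fun n => hN (n + N) (by omega))
    exact (summable_nat_add_iff N).mpr hsum2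
  exact (summable_nat_add_iff N).mp this

end seqs


section hilb
variable {E : Type*} [NormedAddCommGroup E] [InnerProductSpace ℝ E]

lemma aux_avg_norm_sq (μ : ℝ) (u v : E) :
    ‖u + μ • (v - u)‖ ^ 2 = (1 - μ) * ‖u‖ ^ 2 + μ * ‖v‖ ^ 2 - μ * (1 - μ) * ‖u - v‖ ^ 2 := by
  have h1 : ‖u + μ • (v - u)‖ ^ 2 = ‖u‖ ^ 2 + 2 * (μ * ⟪u, v - u⟫) + μ ^ 2 * ‖v - u‖ ^ 2 := by
    rw [norm_add_sq_real, real_inner_smul_right, norm_smul, Real.norm_eq_abs, mul_pow, sq_abs]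
  have h2 : ‖v‖ ^ 2 = ‖u‖ ^ 2 + 2 * ⟪u, v - u⟫ + ‖v - u‖ ^ 2 := by
    have : v = u + (v - u) := by abel
    nth_rewrite 1 [this]
    rw [norm_add_sq_real]
  have h3 : ‖u - v‖ = ‖v - u‖ := norm_sub_rev u v
  rw [h1, h3, h2]; ring

/-- Main abstract Krasnoselskii–Mann machinery. -/
lemma aux_KM (N : E → E) (hN : ∀ u v : E, ‖N u - N v‖ ≤ ‖u - v‖)
    (μ : ℕ → ℝ) (hμ0 : ∀ n, 0 < μ n) (hμ1 : ∀ n, μ n ≤ 1)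
    (η : ℕ → E) (hη : Summable (fun n => μ n * ‖η n‖))
    (hdiv : ¬ Summable (fun n => μ n * (1 - μ n)))
    (ζ : ℕ → E) (hrec : ∀ n, ζ (n + 1) = ζ n + μ n • (N (ζ n) - ζ n + η n))
    (f₀ : E) (hf₀ : N f₀ = f₀) :
    (∀ f : E, N f = f → ∃ l, Tendsto (fun n => ‖ζ n - f‖) atTop (nhds l)) ∧
      Tendsto (fun n => ‖ζ n - N (ζ n)‖) atTop (nhds 0) := by
  -- exact KM point
  set v : ℕ → E := fun n => ζ n + μ n • (N (ζ n) - ζ n) with hv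
  have hζv : ∀ n, ζ (n + 1) = v n + μ n • η n := by
    intro n; rw [hrec n, hv]; simp only [smul_add, add_assoc]
  -- basic Fejér step w.r.t. any fixed point
  have step : ∀ (f : E), N f = f → ∀ n, ‖v n - f‖ ≤ ‖ζ n - f‖ := by
    intro f hf n
    have hid : v n - f = (ζ n - f) + μ n • ((N (ζ n) - f) - (ζ n - f)) := by
      rw [hv]; simp only; module
    rw [hid]
    have h2 : ‖(ζ n - f) + μ n • ((N (ζ n) - f) - (ζ n - f))‖
        ≤ (1 - μ n) * ‖ζ n - f‖ + μ n * ‖N (ζ n) - f‖ := by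
      have : (ζ n - f) + μ n • ((N (ζ n) - f) - (ζ n - f))
          = (1 - μ n) • (ζ n - f) + μ n • (N (ζ n) - f) := by
        module
      rw [this]
      refine (norm_add_le _ _).trans ?_
      rw [norm_smul, norm_smul, Real.norm_eq_abs, Real.norm_eq_abs,
        abs_of_nonneg (by linarith [hμ1 n] : (0:ℝ) ≤ 1 - μ n),
        abs_of_nonneg (le_of_lt (hμ0 n))]
    have h3 : ‖N (ζ n) - f‖ ≤ ‖ζ n - f‖ := by
      have := hN (ζ n) f; rwa [hf] at this
    have := hμ0 n
    nlinarith [norm_nonneg (ζ n - f)]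
  have arec : ∀ (f : E), N f = f → ∀ n, ‖ζ (n+1) - f‖ ≤ ‖ζ n - f‖ + μ n * ‖η n‖ := by
    intro f hf n
    have : ζ (n+1) - f = (v n - f) + μ n • η n := by rw [hζv n]; abel
    rw [this]
    refine (norm_add_le _ _).trans ?_
    rw [norm_smul, Real.norm_eq_abs, abs_of_nonneg (le_of_lt (hμ0 n))]
    exact add_le_add_left (step f hf n) _
  have hηn : ∀ n, 0 ≤ μ n * ‖η n‖ := fun n => mul_nonneg (le_of_lt (hμ0 n)) (norm_nonneg _)
  have hconv : ∀ f : E, N f = f → ∃ l, Tendsto (fun n => ‖ζ n - f‖) atTop (nhds l) :=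
    fun f hf => aux_tendsto_of_quasi _ _ (fun n => norm_nonneg _) hηn hη (arec f hf)
  refine ⟨hconv, ?_⟩
  -- residual
  set c : ℕ → ℝ := fun n => ‖ζ n - N (ζ n)‖ with hc
  -- c almost decreasing
  have crec : ∀ n, c (n + 1) ≤ c n + 2 * (μ n * ‖η n‖) := by
    intro n
    have h1 : ‖v n - N (v n)‖ ≤ c n := by
      have hid : v n - N (v n) = (1 - μ n) • (ζ n - N (ζ n)) + (N (ζ n) - N (v n)) := by
        rw [hv]; simp only; module
      rw [hid]
      refine (norm_add_le _ _).trans ?_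
      have h2 : ‖N (ζ n) - N (v n)‖ ≤ ‖ζ n - v n‖ := hN _ _
      have h3 : ‖ζ n - v n‖ = μ n * c n := by
        rw [hv]; simp only [hc]
        rw [show ζ n - (ζ n + μ n • (N (ζ n) - ζ n)) = μ n • (ζ n - N (ζ n)) by
          rw [smul_sub]; rw [smul_sub]; abel]
        rw [norm_smul, Real.norm_eq_abs, abs_of_nonneg (le_of_lt (hμ0 n))]
      rw [norm_smul, Real.norm_eq_abs, abs_of_nonneg (by linarith [hμ1 n] : (0:ℝ) ≤ 1 - μ n)]
      have := hμ0 n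
      nlinarith [h3 ▸ h2]
    have h4 : ‖ζ (n+1) - v n‖ = μ n * ‖η n‖ := by
      rw [hζv n]; simp [norm_smul, Real.norm_eq_abs, abs_of_nonneg (le_of_lt (hμ0 n))]
    calc c (n+1) = ‖ζ (n+1) - N (ζ (n+1))‖ := rfl
      _ ≤ ‖v n - N (v n)‖ + (‖ζ (n+1) - v n‖ + ‖N (v n) - N (ζ (n+1))‖) := by
          have : ζ (n+1) - N (ζ (n+1)) = (v n - N (v n)) + ((ζ (n+1) - v n) + (N (v n) - N (ζ (n+1)))) := by abel
          rw [this]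
          exact (norm_add_le _ _).trans (by gcongr; exact norm_add_le _ _)
      _ ≤ c n + 2 * (μ n * ‖η n‖) := by
          have h5 : ‖N (v n) - N (ζ (n+1))‖ ≤ μ n * ‖η n‖ := by
            refine (hN _ _).trans ?_
            rw [norm_sub_rev]
            exact le_of_eq h4
          linarith [h1, h5, h4]
  have hη2 : Summable (fun n => 2 * (μ n * ‖η n‖)) := hη.mul_left 2
  obtain ⟨L, hL⟩ := aux_tendsto_of_quasi c _ (fun n => norm_nonneg _)
    (fun n => by have := hηn n; linarith) hη2 crec
  -- summability of μ(1-μ)c²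
  -- bound M on ‖ζ n - f₀‖ and K on μ‖η‖
  obtain ⟨l₀, hl₀⟩ := hconv f₀ hf₀
  obtain ⟨M, hM⟩ : ∃ M, ∀ n, ‖ζ n - f₀‖ ≤ M := by
    obtain ⟨M, hM⟩ := hl₀.bddAbove_range
    exact ⟨M, fun n => hM ⟨n, rfl⟩⟩
  obtain ⟨K, hK⟩ : ∃ K, ∀ n, μ n * ‖η n‖ ≤ K := by
    have := hη.tendsto_atTop_zero.bddAbove_range
    obtain ⟨K, hK⟩ := this
    exact ⟨K, fun n => hK ⟨n, rfl⟩⟩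
  -- squared Fejér
  have sqstep : ∀ n, μ n * (1 - μ n) * c n ^ 2
      ≤ ‖ζ n - f₀‖ ^ 2 - ‖ζ (n+1) - f₀‖ ^ 2 + (μ n * ‖η n‖) * (2 * M + K) := by
    intro n
    have hexp : ‖v n - f₀‖ ^ 2 = (1 - μ n) * ‖ζ n - f₀‖ ^ 2 + μ n * ‖N (ζ n) - f₀‖ ^ 2
        - μ n * (1 - μ n) * ‖(ζ n - f₀) - (N (ζ n) - f₀)‖ ^ 2 := by
      have hid : v n - f₀ = (ζ n - f₀) + μ n • ((N (ζ n) - f₀) - (ζ n - f₀)) := by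
        rw [hv]; simp [smul_sub]; abel
      rw [hid, aux_avg_norm_sq]
    have hNle : ‖N (ζ n) - f₀‖ ≤ ‖ζ n - f₀‖ := by
      have := hN (ζ n) f₀; rwa [hf₀] at this
    have hsub : (ζ n - f₀) - (N (ζ n) - f₀) = ζ n - N (ζ n) := by abel
    have hvle : ‖v n - f₀‖ ^ 2 ≤ ‖ζ n - f₀‖ ^ 2 - μ n * (1 - μ n) * c n ^ 2 := by
      rw [hexp, hsub]
      simp only [hc]
      have := hμ0 n; have := hμ1 n
      nlinarith [pow_le_pow_left₀ (norm_nonneg (N (ζ n) - f₀)) hNle 2]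
    have h6 : ‖ζ (n+1) - f₀‖ ≤ ‖v n - f₀‖ + μ n * ‖η n‖ := by
      have : ζ (n+1) - f₀ = (v n - f₀) + μ n • η n := by rw [hζv n]; abel
      rw [this]
      refine (norm_add_le _ _).trans ?_
      rw [norm_smul, Real.norm_eq_abs, abs_of_nonneg (le_of_lt (hμ0 n))]
    have h7 : ‖ζ (n+1) - f₀‖ ^ 2 ≤ ‖v n - f₀‖ ^ 2 + (μ n * ‖η n‖) * (2 * M + K) := by
      have hvM : ‖v n - f₀‖ ≤ M := (step f₀ hf₀ n).trans (hM n)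
      have := hηn n
      nlinarith [norm_nonneg (ζ (n+1) - f₀), norm_nonneg (v n - f₀), hK n, hM n,
        sq_nonneg (μ n * ‖η n‖)]
    linarith
  have hsummand : Summable (fun n => μ n * (1 - μ n) * c n ^ 2) := by
    apply summable_of_sum_range_le (c := ‖ζ 0 - f₀‖ ^ 2 + (2 * M + K) * ∑' n, μ n * ‖η n‖)
    · intro n
      have h1 := hμ0 n; have h2 := hμ1 n
      have := sq_nonneg (c n)
      exact mul_nonneg (mul_nonneg h1.le (by linarith)) this
    · intro n
      have htel : ∑ i ∈ Finset.range n, (‖ζ i - f₀‖ ^ 2 - ‖ζ (i+1) - f₀‖ ^ 2)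
          = ‖ζ 0 - f₀‖ ^ 2 - ‖ζ n - f₀‖ ^ 2 := by
        exact Finset.sum_range_sub' (fun i => ‖ζ i - f₀‖ ^ 2) n
      calc ∑ i ∈ Finset.range n, μ i * (1 - μ i) * c i ^ 2
          ≤ ∑ i ∈ Finset.range n, ((‖ζ i - f₀‖ ^ 2 - ‖ζ (i+1) - f₀‖ ^ 2) + (μ i * ‖η i‖) * (2 * M + K)) :=
            Finset.sum_le_sum (fun i _ => by linarith [sqstep i])
        _ = (‖ζ 0 - f₀‖ ^ 2 - ‖ζ n - f₀‖ ^ 2) + (∑ i ∈ Finset.range n, μ i * ‖η i‖) * (2 * M + K) := by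
            rw [Finset.sum_add_distrib, htel, ← Finset.sum_mul]
        _ ≤ ‖ζ 0 - f₀‖ ^ 2 + (2 * M + K) * ∑' n, μ n * ‖η n‖ := by
            have h8 : ∑ i ∈ Finset.range n, μ i * ‖η i‖ ≤ ∑' n, μ n * ‖η n‖ :=
              Summable.sum_le_tsum (Finset.range n) (fun k _ => hηn k) hη
            have h9 : (0:ℝ) ≤ 2 * M + K := by
              have := (norm_nonneg (ζ 0 - f₀)).trans (hM 0)
              have := (hηn 0).trans (hK 0)
              linarith
            nlinarith [sq_nonneg ‖ζ n - f₀‖]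
    
  -- conclude c → 0
  have hL0 : L = 0 := by
    apply aux_limit_zero c (fun n => μ n * (1 - μ n)) L (fun n => norm_nonneg _) hL hdiv
      (fun n => mul_nonneg (le_of_lt (hμ0 n)) (by linarith [hμ1 n]))
    exact hsummand
  rw [← hL0]; exact hL

end hilb


section weak
variable {E : Type*} [NormedAddCommGroup E] [InnerProductSpace ℝ E]

lemma aux_ultra_lim (f : ℕ → ℝ) (C : ℝ) (h : ∀ n, |f n| ≤ C) (U : Ultrafilter ℕ) :
    ∃ c, |c| ≤ C ∧ Tendsto f (↑U) (nhds c) := by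
  have hc : (Filter.map f ↑U) ≤ Filter.principal (Set.Icc (-C) C) := by
    rw [le_principal_iff, Filter.mem_map]
    have : f ⁻¹' Set.Icc (-C) C = Set.univ := by
      ext n; simp only [Set.mem_preimage, Set.mem_Icc, Set.mem_univ, iff_true]
      exact abs_le.mp (h n)
    rw [this]; exact Filter.univ_mem
  obtain ⟨c, hcmem, hle⟩ := isCompact_Icc.ultrafilter_le_nhds (U.map f)
    (by rwa [Ultrafilter.coe_map])
  exact ⟨c, abs_le.mpr ⟨hcmem.1, hcmem.2⟩, by rwa [Ultrafilter.coe_map] at hle⟩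

lemma aux_ultra_weak_limit [CompleteSpace E] (ζ : ℕ → E) (M : ℝ) (hb : ∀ n, ‖ζ n‖ ≤ M)
    (U : Ultrafilter ℕ) :
    ∃ w : E, ∀ y : E, Tendsto (fun n => ⟪ζ n, y⟫) (↑U) (nhds ⟪w, y⟫) := by
  have key : ∀ y : E, ∃ c : ℝ, Tendsto (fun n => ⟪ζ n, y⟫) (↑U) (nhds c) := by
    intro y
    obtain ⟨c, _, hc⟩ := aux_ultra_lim (fun n => ⟪ζ n, y⟫) (M * ‖y‖)
      (fun n => (abs_real_inner_le_norm _ _).trans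
        (mul_le_mul_of_nonneg_right (hb n) (norm_nonneg y))) U
    exact ⟨c, hc⟩
  choose F hF using key
  have hadd : ∀ y y', F (y + y') = F y + F y' := by
    intro y y'
    refine tendsto_nhds_unique ?_ ((hF y).add (hF y'))
    exact (hF (y + y')).congr (fun n => by rw [inner_add_right])
  have hsmul : ∀ (r : ℝ) (y : E), F (r • y) = r * F y := by
    intro r y
    refine tendsto_nhds_unique ?_ ((hF y).const_mul r)
    exact (hF (r • y)).congr (fun n => by rw [real_inner_smul_right])
  have hbound : ∀ y, |F y| ≤ M * ‖y‖ := by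
    intro y
    have h1 : Tendsto (fun n => |⟪ζ n, y⟫|) (↑U) (nhds |F y|) := (hF y).abs
    exact le_of_tendsto h1 (Filter.Eventually.of_forall fun n =>
      (abs_real_inner_le_norm _ _).trans (mul_le_mul_of_nonneg_right (hb n) (norm_nonneg y)))
  let φ : E →ₗ[ℝ] ℝ :=
    { toFun := F
      map_add' := hadd
      map_smul' := hsmul }
  let φc : E →L[ℝ] ℝ := LinearMap.mkContinuous φ M (fun y => by
    rw [Real.norm_eq_abs]; exact hbound y)
  refine ⟨(InnerProductSpace.toDual ℝ E).symm φc, fun y => ?_⟩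
  have : ⟪(InnerProductSpace.toDual ℝ E).symm φc, y⟫ = φc y := by
    rw [← InnerProductSpace.toDual_apply_apply]
    simp
  rw [this]
  exact hF y

/-- Full abstract weak convergence theorem for KM iterations. -/
lemma aux_weak_conv_KM [CompleteSpace E] (N : E → E) (hN : ∀ u v : E, ‖N u - N v‖ ≤ ‖u - v‖)
    (μ : ℕ → ℝ) (hμ0 : ∀ n, 0 < μ n) (hμ1 : ∀ n, μ n ≤ 1)
    (η : ℕ → E) (hη : Summable (fun n => μ n * ‖η n‖))
    (hdiv : ¬ Summable (fun n => μ n * (1 - μ n)))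
    (ζ : ℕ → E) (hrec : ∀ n, ζ (n + 1) = ζ n + μ n • (N (ζ n) - ζ n + η n))
    (f₀ : E) (hf₀ : N f₀ = f₀) :
    ∃ w : E, N w = w ∧ (∀ y : E, Tendsto (fun n => ⟪ζ n, y⟫) atTop (nhds ⟪w, y⟫)) ∧
      Tendsto (fun n => ‖ζ n - N (ζ n)‖) atTop (nhds 0) ∧
      (∀ f : E, N f = f → ∃ l, Tendsto (fun n => ‖ζ n - f‖) atTop (nhds l)) := by
  obtain ⟨hconv, hres⟩ := aux_KM N hN μ hμ0 hμ1 η hη hdiv ζ hrec f₀ hf₀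
  obtain ⟨l₀, hl₀⟩ := hconv f₀ hf₀
  obtain ⟨M₀, hM₀⟩ : ∃ M₀, ∀ n, ‖ζ n - f₀‖ ≤ M₀ := by
    obtain ⟨M, hM⟩ := hl₀.bddAbove_range
    exact ⟨M, fun n => hM ⟨n, rfl⟩⟩
  set M : ℝ := M₀ + ‖f₀‖ with hMdef
  have hb : ∀ n, ‖ζ n‖ ≤ M := by
    intro n
    calc ‖ζ n‖ = ‖(ζ n - f₀) + f₀‖ := by rw [sub_add_cancel]
      _ ≤ ‖ζ n - f₀‖ + ‖f₀‖ := norm_add_le _ _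
      _ ≤ M := by rw [hMdef]; linarith [hM₀ n]
  -- demiclosedness along ultrafilters
  have demi : ∀ (U : Ultrafilter ℕ), (↑U : Filter ℕ) ≤ atTop → ∀ w : E,
      (∀ y, Tendsto (fun n => ⟪ζ n, y⟫) (↑U) (nhds ⟪w, y⟫)) → N w = w := by
    intro U hU w hw
    have hbw : ∀ n, ‖ζ n - w‖ ≤ M + ‖w‖ := fun n =>
      (norm_sub_le _ _).trans (by linarith [hb n])
    have hbw2 : ∀ n, |‖ζ n - w‖ ^ 2| ≤ (M + ‖w‖) ^ 2 := by
      intro n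
      rw [abs_of_nonneg (sq_nonneg _)]
      exact pow_le_pow_left₀ (norm_nonneg _) (hbw n) 2
    obtain ⟨L, _, hLt⟩ := aux_ultra_lim (fun n => ‖ζ n - w‖ ^ 2) ((M + ‖w‖) ^ 2) hbw2 U
    have hcU : Tendsto (fun n => ‖ζ n - N (ζ n)‖) (↑U) (nhds 0) := hres.mono_left hU
    have hinner : Tendsto (fun n => ⟪ζ n - w, w - N w⟫) (↑U) (nhds 0) := by
      have h1 : (fun n => ⟪ζ n - w, w - N w⟫) = fun n => ⟪ζ n, w - N w⟫ - ⟪w, w - N w⟫ := by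
        funext n; rw [inner_sub_left]
      rw [h1]
      have := (hw (w - N w)).sub (tendsto_const_nhds (x := ⟪w, w - N w⟫))
      simpa using this
    have h2 : ∀ n, ‖ζ n - N w‖ ^ 2
        = ‖ζ n - w‖ ^ 2 + 2 * ⟪ζ n - w, w - N w⟫ + ‖w - N w‖ ^ 2 := by
      intro n
      have hd : ζ n - N w = (ζ n - w) + (w - N w) := by abel
      rw [hd, norm_add_sq_real]
    have hbound : ∀ n, ‖ζ n - N w‖ ^ 2 ≤
        ‖ζ n - N (ζ n)‖ ^ 2 + 2 * ‖ζ n - N (ζ n)‖ * (M + ‖w‖) + ‖ζ n - w‖ ^ 2 := by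
      intro n
      have ht1 : ‖ζ n - N w‖ ≤ ‖ζ n - N (ζ n)‖ + ‖ζ n - w‖ := by
        have hd : ζ n - N w = (ζ n - N (ζ n)) + (N (ζ n) - N w) := by abel
        rw [hd]
        exact (norm_add_le _ _).trans (add_le_add_right (hN _ _) _)
      have h3 := hbw n
      nlinarith [norm_nonneg (ζ n - N w), norm_nonneg (ζ n - N (ζ n)), norm_nonneg (ζ n - w)]
    have hRHS1 : Tendsto (fun n => ‖ζ n - w‖ ^ 2 + 2 * ⟪ζ n - w, w - N w⟫ + ‖w - N w‖ ^ 2)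
        (↑U) (nhds (L + 2 * 0 + ‖w - N w‖ ^ 2)) :=
      (hLt.add ((hinner.const_mul 2))).add_const _
    have hRHS2 : Tendsto (fun n => ‖ζ n - N (ζ n)‖ ^ 2 + 2 * ‖ζ n - N (ζ n)‖ * (M + ‖w‖)
        + ‖ζ n - w‖ ^ 2) (↑U) (nhds (0 ^ 2 + 2 * 0 * (M + ‖w‖) + L)) :=
      ((hcU.pow 2).add ((hcU.const_mul 2).mul_const _)).add hLt
    have hle : L + 2 * 0 + ‖w - N w‖ ^ 2 ≤ 0 ^ 2 + 2 * 0 * (M + ‖w‖) + L := by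
      refine le_of_tendsto_of_tendsto' hRHS1 hRHS2 (fun n => ?_)
      rw [← h2 n]; exact hbound n
    have : ‖w - N w‖ ^ 2 ≤ 0 := by linarith
    have h4 : ‖w - N w‖ = 0 := by nlinarith [norm_nonneg (w - N w), sq_nonneg ‖w - N w‖]
    have h5 : w - N w = 0 := norm_eq_zero.mp h4
    rw [← sub_eq_zero]; rw [← neg_sub w (N w), h5, neg_zero]
  -- pick the limit from one ultrafilter
  have hNB : (atTop : Filter ℕ).NeBot := atTop_neBot
  set U₀ := Ultrafilter.of (atTop : Filter ℕ) with hU₀def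
  have hU₀ : (↑U₀ : Filter ℕ) ≤ atTop := Ultrafilter.of_le _
  obtain ⟨w, hwU⟩ := aux_ultra_weak_limit ζ M hb U₀
  have hwfix : N w = w := demi U₀ hU₀ w hwU
  refine ⟨w, hwfix, ?_, hres, hconv⟩
  intro y
  rw [tendsto_iff_ultrafilter]
  intro U hU
  obtain ⟨wU, hwUlim⟩ := aux_ultra_weak_limit ζ M hb U
  have hUfix : N wU = wU := demi U hU wU hwUlim
  suffices hEq : wU = w by rw [← hEq]; exact hwUlim y
  obtain ⟨l1, hl1⟩ := hconv w hwfix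
  obtain ⟨l2, hl2⟩ := hconv wU hUfix
  have hid : ∀ n, ‖ζ n - w‖ ^ 2 - ‖ζ n - wU‖ ^ 2
      = -2 * ⟪ζ n, w - wU⟫ + (‖w‖ ^ 2 - ‖wU‖ ^ 2) := by
    intro n
    have e1 : ‖ζ n - w‖ ^ 2 = ‖ζ n‖ ^ 2 - 2 * ⟪ζ n, w⟫ + ‖w‖ ^ 2 := norm_sub_sq_real _ _
    have e2 : ‖ζ n - wU‖ ^ 2 = ‖ζ n‖ ^ 2 - 2 * ⟪ζ n, wU⟫ + ‖wU‖ ^ 2 := norm_sub_sq_real _ _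
    rw [e1, e2, inner_sub_right]; ring
  have ht : Tendsto (fun n => ‖ζ n - w‖ ^ 2 - ‖ζ n - wU‖ ^ 2) atTop
      (nhds (l1 ^ 2 - l2 ^ 2)) := (hl1.pow 2).sub (hl2.pow 2)
  have ht' : Tendsto (fun n => -2 * ⟪ζ n, w - wU⟫ + (‖w‖ ^ 2 - ‖wU‖ ^ 2)) atTop
      (nhds (l1 ^ 2 - l2 ^ 2)) := by
    refine Tendsto.congr (fun n => hid n) ht
  have hA : Tendsto (fun n => -2 * ⟪ζ n, w - wU⟫ + (‖w‖ ^ 2 - ‖wU‖ ^ 2)) (↑U₀)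
      (nhds (-2 * ⟪w, w - wU⟫ + (‖w‖ ^ 2 - ‖wU‖ ^ 2))) :=
    ((hwU (w - wU)).const_mul (-2)).add_const _
  have hB : Tendsto (fun n => -2 * ⟪ζ n, w - wU⟫ + (‖w‖ ^ 2 - ‖wU‖ ^ 2)) (↑U)
      (nhds (-2 * ⟪wU, w - wU⟫ + (‖w‖ ^ 2 - ‖wU‖ ^ 2))) :=
    ((hwUlim (w - wU)).const_mul (-2)).add_const _
  have e3 : -2 * ⟪w, w - wU⟫ + (‖w‖ ^ 2 - ‖wU‖ ^ 2) = l1 ^ 2 - l2 ^ 2 :=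
    tendsto_nhds_unique hA (ht'.mono_left hU₀)
  have e4 : -2 * ⟪wU, w - wU⟫ + (‖w‖ ^ 2 - ‖wU‖ ^ 2) = l1 ^ 2 - l2 ^ 2 :=
    tendsto_nhds_unique hB (ht'.mono_left hU)
  have e5 : ⟪w - wU, w - wU⟫ = 0 := by
    rw [inner_sub_left]; linarith
  have e6 : w - wU = 0 := inner_self_eq_zero.mp e5
  rw [← sub_eq_zero, ← neg_sub w wU, e6, neg_zero]

end weak


section master
variable {H : Type*} [NormedAddCommGroup H] [InnerProductSpace ℝ H]

lemma aux_master {ι : Type*} [Fintype ι] (ω : ι → ℝ) (hω0 : ∀ i, 0 < ω i)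
    (hω1 : ∑ i, ω i = 1)
    (β γ α : ℝ) (hβ : 0 < β) (hγ : 0 < γ) (hα : 0 < α) (hκ : γ / (2 * β) ≤ 2 - α⁻¹)
    (d ε : ι → H) (g : H)
    (hmono : ∀ i, 0 ≤ ⟪(∑ j, ω j • d j) + ε i, ((∑ j, ω j • d j) - d i - g) - ε i⟫)
    (hco : (β / γ) * ‖g‖ ^ 2 ≤ ⟪(∑ j, ω j • d j), g⟫) :
    (∑ i, ω i * ‖d i + α⁻¹ • ε i‖ ^ 2 ≤ ∑ i, ω i * ‖d i‖ ^ 2) ∧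
    (∑ i, ω i * ‖d i + ε i‖ ^ 2 ≤ ∑ i, ω i * ‖d i‖ ^ 2 - ∑ i, ω i * ‖ε i‖ ^ 2
      - (2 * β / γ) * ‖g‖ ^ 2 - 2 * ⟪∑ j, ω j • ε j, g⟫) := by
  set δ : H := ∑ j, ω j • d j with hδ
  set S : H := ∑ j, ω j • ε j with hS
  set P : ℝ := ∑ i, ω i * ⟪ε i, d i⟫ with hP
  set Q : ℝ := ∑ i, ω i * ‖ε i‖ ^ 2 with hQ
  set Dd : ℝ := ∑ i, ω i * ‖d i‖ ^ 2 with hDd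
  set G : ℝ := ‖g‖ ^ 2 with hG
  set Dg : ℝ := ⟪δ, g⟫ with hDg
  set Sg : ℝ := ⟪S, g⟫ with hSg
  set Ns : ℝ := ‖S‖ ^ 2 with hNs
  -- expansion of the monotonicity term
  have expand : ∀ i, ⟪δ + ε i, (δ - d i - g) - ε i⟫
      = ⟪δ, δ⟫ - ⟪δ, d i⟫ - ⟪δ, g⟫ - ⟪ε i, d i⟫ - ⟪ε i, g⟫ - ⟪ε i, ε i⟫ := by
    intro i
    simp only [inner_add_left, inner_sub_right]
    rw [real_inner_comm (ε i) δ]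
    ring
  have sum_d : ∑ i, ω i * ⟪δ, d i⟫ = ⟪δ, δ⟫ := by
    calc ∑ i, ω i * ⟪δ, d i⟫ = ∑ i, ⟪δ, ω i • d i⟫ := by
          refine Finset.sum_congr rfl (fun i _ => ?_)
          rw [real_inner_smul_right]
      _ = ⟪δ, δ⟫ := by rw [hδ, inner_sum]
  have sum_g : ∑ i, ω i * ⟪ε i, g⟫ = Sg := by
    calc ∑ i, ω i * ⟪ε i, g⟫ = ∑ i, ⟪ω i • ε i, g⟫ := by
          refine Finset.sum_congr rfl (fun i _ => ?_)
          rw [real_inner_smul_left]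
      _ = Sg := by rw [hSg, hS, sum_inner]
  have key0 : P ≤ - Q - Dg - Sg := by
    have key : 0 ≤ ∑ i, ω i * ⟪δ + ε i, (δ - d i - g) - ε i⟫ :=
      Finset.sum_nonneg (fun i _ => mul_nonneg (hω0 i).le (hmono i))
    have iden : ∑ i, ω i * ⟪δ + ε i, (δ - d i - g) - ε i⟫ = - Dg - P - Sg - Q := by
      calc ∑ i, ω i * ⟪δ + ε i, (δ - d i - g) - ε i⟫
          = ∑ i, (ω i * ⟪δ, δ⟫ - ω i * ⟪δ, d i⟫ - ω i * ⟪δ, g⟫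
              - ω i * ⟪ε i, d i⟫ - ω i * ⟪ε i, g⟫ - ω i * ‖ε i‖ ^ 2) := by
            refine Finset.sum_congr rfl (fun i _ => ?_)
            rw [expand i, real_inner_self_eq_norm_sq (ε i)]
            ring
        _ = (∑ i, ω i * ⟪δ, δ⟫) - (∑ i, ω i * ⟪δ, d i⟫) - (∑ i, ω i * ⟪δ, g⟫)
              - (∑ i, ω i * ⟪ε i, d i⟫) - (∑ i, ω i * ⟪ε i, g⟫) - (∑ i, ω i * ‖ε i‖ ^ 2) := by
            simp only [Finset.sum_sub_distrib]
        _ = - Dg - P - Sg - Q := by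
            rw [sum_d, sum_g, ← Finset.sum_mul, ← Finset.sum_mul, hω1]
            simp only [one_mul, hP, hQ, hDg]
            ring
    linarith [key, iden ▸ key]
  -- variance inequality
  have hvar : Ns ≤ Q := by
    have sum_eS : ∑ i, ω i * ⟪ε i, S⟫ = Ns := by
      calc ∑ i, ω i * ⟪ε i, S⟫ = ∑ i, ⟪ω i • ε i, S⟫ := by
            refine Finset.sum_congr rfl (fun i _ => ?_)
            rw [real_inner_smul_left]
        _ = ⟪S, S⟫ := by rw [hS, sum_inner]
        _ = Ns := real_inner_self_eq_norm_sq S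
    have h0 : 0 ≤ ∑ i, ω i * ‖ε i - S‖ ^ 2 :=
      Finset.sum_nonneg (fun i _ => mul_nonneg (hω0 i).le (sq_nonneg _))
    have hid : ∑ i, ω i * ‖ε i - S‖ ^ 2 = Q - Ns := by
      calc ∑ i, ω i * ‖ε i - S‖ ^ 2
          = ∑ i, (ω i * ‖ε i‖ ^ 2 - 2 * (ω i * ⟪ε i, S⟫) + ω i * ‖S‖ ^ 2) := by
            refine Finset.sum_congr rfl (fun i _ => ?_)
            rw [norm_sub_sq_real]
            ring
        _ = Q - 2 * Ns + Ns := by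
            rw [Finset.sum_add_distrib, Finset.sum_sub_distrib, ← Finset.mul_sum, sum_eS,
              ← Finset.sum_mul, hω1, one_mul, hQ]
        _ = Q - Ns := by ring
    linarith [hid ▸ h0]
  -- constants
  set κ : ℝ := 2 - α⁻¹ with hκdef
  have hκpos : 0 < κ := lt_of_lt_of_le (by positivity) hκ
  have hκinv : κ⁻¹ ≤ 2 * β / γ := by
    have h1 : 0 < γ / (2 * β) := by positivity
    have h2 : κ⁻¹ ≤ (γ / (2 * β))⁻¹ := by
      apply inv_anti₀ h1 hκ
    rwa [inv_div] at h2
  -- AM-GM via a square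
  have hAM : 0 ≤ κ * Ns + 2 * Sg + κ⁻¹ * G := by
    have h1 : (0:ℝ) ≤ ‖κ • S + g‖ ^ 2 := sq_nonneg _
    have h2 : ‖κ • S + g‖ ^ 2 = κ ^ 2 * Ns + 2 * (κ * Sg) + G := by
      rw [norm_add_sq_real, real_inner_smul_left, norm_smul, Real.norm_eq_abs,
        abs_of_pos hκpos, mul_pow, hNs, hSg, hG]
    have h3 : 0 ≤ κ⁻¹ * (κ ^ 2 * Ns + 2 * (κ * Sg) + G) := by
      apply mul_nonneg (inv_pos.mpr hκpos).le
      rw [← h2]; exact h1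
    have h4 : κ⁻¹ * (κ ^ 2 * Ns + 2 * (κ * Sg) + G) = κ * Ns + 2 * Sg + κ⁻¹ * G := by
      field_simp
    linarith [h4 ▸ h3]
  have hGnn : 0 ≤ G := sq_nonneg _
  -- scalar inequality for part 1
  have hsc : 2 * P + α⁻¹ * Q ≤ 0 := by
    have hco' : (β / γ) * G ≤ Dg := hco
    have hp1 : κ * Ns ≤ κ * Q := mul_le_mul_of_nonneg_left hvar hκpos.le
    have hp2 : κ⁻¹ * G ≤ (2 * β / γ) * G := mul_le_mul_of_nonneg_right hκinv hGnn
    have hβγ : (2 * β / γ) * G = 2 * ((β / γ) * G) := by ring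
    have hakq : α⁻¹ * Q = 2 * Q - κ * Q := by rw [hκdef]; ring
    have s1 : 2 * P + α⁻¹ * Q ≤ -2 * Dg - 2 * Sg - κ * Q := by linarith [key0, hakq]
    have s2 : -2 * Dg - 2 * Sg - κ * Q ≤ -2 * Dg - 2 * Sg - κ * Ns := by linarith [hp1]
    have s3 : -2 * Dg - 2 * Sg - κ * Ns ≤ -2 * Dg + κ⁻¹ * G := by linarith [hAM]
    have s4 : -2 * Dg + κ⁻¹ * G ≤ -2 * ((β / γ) * G) + κ⁻¹ * G := by linarith [hco']
    have s5 : -2 * ((β / γ) * G) + κ⁻¹ * G ≤ 0 := by linarith [hp2, hβγ]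
    exact s1.trans (s2.trans (s3.trans (s4.trans s5)))
  constructor
  · -- part 1
    have exp1 : ∀ i, ω i * ‖d i + α⁻¹ • ε i‖ ^ 2
        = ω i * ‖d i‖ ^ 2 + 2 * α⁻¹ * (ω i * ⟪ε i, d i⟫) + α⁻¹ ^ 2 * (ω i * ‖ε i‖ ^ 2) := by
      intro i
      rw [norm_add_sq_real, real_inner_smul_right, norm_smul, Real.norm_eq_abs,
        abs_of_pos (inv_pos.mpr hα), mul_pow, real_inner_comm (d i) (ε i)]
      ring
    have hsum1 : ∑ i, ω i * ‖d i + α⁻¹ • ε i‖ ^ 2 = Dd + 2 * α⁻¹ * P + α⁻¹ ^ 2 * Q := by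
      calc ∑ i, ω i * ‖d i + α⁻¹ • ε i‖ ^ 2
          = ∑ i, (ω i * ‖d i‖ ^ 2 + 2 * α⁻¹ * (ω i * ⟪ε i, d i⟫) + α⁻¹ ^ 2 * (ω i * ‖ε i‖ ^ 2)) :=
            Finset.sum_congr rfl (fun i _ => exp1 i)
        _ = Dd + 2 * α⁻¹ * P + α⁻¹ ^ 2 * Q := by
            rw [Finset.sum_add_distrib, Finset.sum_add_distrib, ← Finset.mul_sum, ← Finset.mul_sum]
    rw [hsum1]
    have h9 : α⁻¹ * (2 * P + α⁻¹ * Q) ≤ α⁻¹ * 0 :=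
      mul_le_mul_of_nonneg_left hsc (inv_pos.mpr hα).le
    rw [mul_zero] at h9
    have h10 : α⁻¹ * (2 * P + α⁻¹ * Q) = 2 * α⁻¹ * P + α⁻¹ ^ 2 * Q := by ring
    linarith [h10 ▸ h9]
  · -- part 2
    have exp2 : ∀ i, ω i * ‖d i + ε i‖ ^ 2
        = ω i * ‖d i‖ ^ 2 + 2 * (ω i * ⟪ε i, d i⟫) + ω i * ‖ε i‖ ^ 2 := by
      intro i
      rw [norm_add_sq_real, real_inner_comm (d i) (ε i)]
      ring
    have hsum2 : ∑ i, ω i * ‖d i + ε i‖ ^ 2 = Dd + 2 * P + Q := by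
      calc ∑ i, ω i * ‖d i + ε i‖ ^ 2
          = ∑ i, (ω i * ‖d i‖ ^ 2 + 2 * (ω i * ⟪ε i, d i⟫) + ω i * ‖ε i‖ ^ 2) :=
            Finset.sum_congr rfl (fun i _ => exp2 i)
        _ = Dd + 2 * P + Q := by
            rw [Finset.sum_add_distrib, Finset.sum_add_distrib, ← Finset.mul_sum]
    rw [hsum2]
    have hco' : (β / γ) * G ≤ Dg := hco
    have hthis : (2 * β / γ) * G = 2 * ((β / γ) * G) := by ring
    linarith [key0, hco', hthis]

end master
section bridge

lemma aux_sq_le (a b : ℝ) (ha : 0 ≤ a) (hb : 0 ≤ b) (h : a ^ 2 ≤ b ^ 2) : a ≤ b := by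
  nlinarith

lemma aux_apply_norm_le {ι : Type*} [Fintype ι] {G : ι → Type*}
    [∀ i, SeminormedAddCommGroup (G i)] (v : PiLp 2 G) (i : ι) : ‖v i‖ ≤ ‖v‖ := by
  refine aux_sq_le _ _ (norm_nonneg _) (norm_nonneg _) ?_
  rw [PiLp.norm_sq_eq_of_L2]
  exact Finset.single_le_sum (fun j _ => sq_nonneg ‖v j‖) (Finset.mem_univ i)

lemma aux_pinorm_le_sum {ι : Type*} [Fintype ι] {G : ι → Type*}
    [∀ i, SeminormedAddCommGroup (G i)] (v : PiLp 2 G) : ‖v‖ ≤ ∑ i, ‖v i‖ := by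
  refine aux_sq_le _ _ (norm_nonneg _) (Finset.sum_nonneg fun i _ => norm_nonneg _) ?_
  rw [PiLp.norm_sq_eq_of_L2]
  have h1 : ∀ i ∈ Finset.univ, ‖v i‖ ^ 2 ≤ ‖v i‖ * ∑ j, ‖v j‖ := by
    intro i _
    rw [sq]
    exact mul_le_mul_of_nonneg_left
      (Finset.single_le_sum (fun j _ => norm_nonneg (v j)) (Finset.mem_univ i)) (norm_nonneg _)
  refine (Finset.sum_le_sum h1).trans ?_
  rw [← Finset.sum_mul, sq]

abbrev auxIdx (m : ℕ) := {k : ℕ // k ∈ Finset.Icc 1 m}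

abbrev auxE (H : Type*) [NormedAddCommGroup H] [InnerProductSpace ℝ H] (m : ℕ) :=
  PiLp 2 (fun _ : auxIdx m => H)

instance auxE.completeSpace {H : Type*} [NormedAddCommGroup H] [InnerProductSpace ℝ H]
    [CompleteSpace H] (m : ℕ) : CompleteSpace (auxE H m) :=
  inferInstance

end bridge

theorem statement16
    (m : ℕ) (hm : 1 ≤ m)
    (A : ℕ → H → Set H) (hA : ∀ i ∈ Finset.Icc 1 m, IsMaxMonotoneOp (A i))
    (β : ℝ) (hβ : 0 < β)
    (B : H → H) (hB : ∀ x y : H, β * ‖B x - B y‖ ^ 2 ≤ ⟪x - y, B x - B y⟫)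
    (hsol : ∃ x : H, ∃ u : ℕ → H, (∀ i ∈ Finset.Icc 1 m, u i ∈ A i x) ∧
      (∑ i ∈ Finset.Icc 1 m, u i) + B x = 0)
    (ω : ℕ → ℝ) (hω : ∀ i ∈ Finset.Icc 1 m, ω i ∈ Set.Ioo (0 : ℝ) 1)
    (hωsum : (∑ i ∈ Finset.Icc 1 m, ω i) = 1)
    (γ : ℝ) (hγ : γ ∈ Set.Ioo (0 : ℝ) (2 * β))
    (α : ℝ) (hα : α = max (2 / 3) (2 * γ / (γ + 2 * β)))
    (lam : ℕ → ℝ) (hlam : ∀ n, lam n ∈ Set.Ioo (0 : ℝ) (1 / α))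
    (a : ℕ → H) (b : ℕ → ℕ → H)
    (hdiv : ¬ Summable (fun n => lam n * (1 - α * lam n)))
    (herr : ∀ i ∈ Finset.Icc 1 m, Summable (fun n => lam n * (‖a n‖ + ‖b i n‖)))
    (J : ℕ → H → H)
    (hJ : ∀ i ∈ Finset.Icc 1 m, ∀ x p : H, J i x = p ↔ ∃ u ∈ A i p, x - p = (γ / ω i) • u)
    (z s p : ℕ → ℕ → H) (x : ℕ → H)
    (hx : ∀ n, x n = ∑ i ∈ Finset.Icc 1 m, ω i • z i n)
    (hs : ∀ n, ∀ i ∈ Finset.Icc 1 m, s i n = (2 : ℝ) • x n - z i n - γ • (B (x n) + a n))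
    (hp : ∀ n, ∀ i ∈ Finset.Icc 1 m, p i n = J i (s i n) + b i n)
    (hzr : ∀ n, ∀ i ∈ Finset.Icc 1 m, z i (n + 1) = z i n + lam n • (p i n - x n)) :
    ∃ xbar : H,
      (∃ u : ℕ → H, (∀ i ∈ Finset.Icc 1 m, u i ∈ A i xbar) ∧
        (∑ i ∈ Finset.Icc 1 m, u i) + B xbar = 0) ∧
      WeakLim x xbar ∧
      Tendsto (fun n => B (x n)) atTop (nhds (B xbar)) ∧
      Tendsto (fun n => x (n + 1) - x n) atTop (nhds 0) := by
  classical
  -- Step A : constants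
  have hγ0 : 0 < γ := hγ.1
  have hγ2 : γ < 2 * β := hγ.2
  have hα0 : 0 < α := by
    rw [hα]
    exact lt_of_lt_of_le (by norm_num) (le_max_left _ _)
  have hαcond : γ / (2 * β) ≤ 2 - α⁻¹ := by
    rcases le_total γ β with h | h
    · have h1 : α⁻¹ ≤ (2 / 3 : ℝ)⁻¹ := by
        apply inv_anti₀ (by norm_num)
        rw [hα]; exact le_max_left _ _
      have h2 : γ / (2 * β) ≤ 1 / 2 := by
        rw [div_le_iff₀ (by positivity)]
        linarith
      norm_num at h1
      linarith
    · have hpos : (0:ℝ) < 2 * γ / (γ + 2 * β) := by positivity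
      have h1 : α⁻¹ ≤ (2 * γ / (γ + 2 * β))⁻¹ := by
        apply inv_anti₀ hpos
        rw [hα]; exact le_max_right _ _
      rw [inv_div] at h1
      have hsum' : γ / (2 * β) + (γ + 2 * β) / (2 * γ) ≤ 2 := by
        rw [div_add_div _ _ (by positivity : (2*β:ℝ) ≠ 0) (by positivity : (2*γ:ℝ) ≠ 0),
          div_le_iff₀ (by positivity)]
        nlinarith [mul_nonneg (sub_nonneg.mpr h) (sub_nonneg.mpr hγ2.le)]
      linarith
  -- Step B : weights
  have hωp : ∀ i : auxIdx m, 0 < ω ↑i := fun i => (hω ↑i i.2).1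
  have hωl : ∀ i : auxIdx m, ω ↑i < 1 := fun i => (hω ↑i i.2).2
  set σ : auxIdx m → ℝ := fun i => Real.sqrt (ω ↑i) with hσdef
  have hσp : ∀ i, 0 < σ i := fun i => Real.sqrt_pos.mpr (hωp i)
  have hσsq : ∀ i, σ i * σ i = ω ↑i := fun i => Real.mul_self_sqrt (hωp i).le
  have hσsq' : ∀ i, σ i ^ 2 = ω ↑i := fun i => by rw [sq, hσsq]
  have hσle1 : ∀ i, σ i ≤ 1 := fun i => Real.sqrt_le_one.mpr (hωl i).le
  have hω1 : ∑ i : auxIdx m, ω ↑i = 1 := by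
    rw [Finset.sum_coe_sort]; exact hωsum
  -- Step C : tuple operators
  set xx : (auxIdx m → H) → H := fun zv => ∑ i : auxIdx m, ω ↑i • zv i with hxxdef
  set rr : (auxIdx m → H) → auxIdx m → H :=
    fun zv i => J ↑i ((2:ℝ) • xx zv - zv i - γ • B (xx zv)) with hrrdef
  have hJchar : ∀ (i : auxIdx m) (t : H), ∃ u ∈ A ↑i (J ↑i t), t - J ↑i t = (γ / ω ↑i) • u :=
    fun i t => (hJ ↑i i.2 t (J ↑i t)).mp rfl
  have hJnonexp : ∀ (i : auxIdx m) (t t' : H), ‖J ↑i t - J ↑i t'‖ ≤ ‖t - t'‖ := by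
    intro i t t'
    obtain ⟨u, hu, hequ⟩ := hJchar i t
    obtain ⟨u', hu', hequ'⟩ := hJchar i t'
    have hmo : 0 ≤ ⟪J ↑i t - J ↑i t', (t - J ↑i t) - (t' - J ↑i t')⟫ := by
      rw [hequ, hequ', ← smul_sub, real_inner_smul_right]
      exact mul_nonneg (div_nonneg hγ0.le (hωp i).le) ((hA ↑i i.2).1 _ _ u u' hu hu')
    have hexp : ⟪J ↑i t - J ↑i t', (t - J ↑i t) - (t' - J ↑i t')⟫
        = ⟪J ↑i t - J ↑i t', t - t'⟫ - ‖J ↑i t - J ↑i t'‖ ^ 2 := by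
      have hid : (t - J ↑i t) - (t' - J ↑i t') = (t - t') - (J ↑i t - J ↑i t') := by abel
      rw [hid, inner_sub_right, real_inner_self_eq_norm_sq]
    have hcs : ⟪J ↑i t - J ↑i t', t - t'⟫ ≤ ‖J ↑i t - J ↑i t'‖ * ‖t - t'‖ :=
      real_inner_le_norm _ _
    by_cases hz : ‖J ↑i t - J ↑i t'‖ = 0
    · rw [hz]; exact norm_nonneg _
    · have hz' : 0 < ‖J ↑i t - J ↑i t'‖ := lt_of_le_of_ne (norm_nonneg _) (Ne.symm hz)
      nlinarith [hmo, hexp, hcs]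
  have hδsum : ∀ zp zq : auxIdx m → H,
      ∑ j : auxIdx m, ω ↑j • (zp j - zq j) = xx zp - xx zq := by
    intro zp zq
    simp only [hxxdef]
    rw [← Finset.sum_sub_distrib]
    exact Finset.sum_congr rfl (fun j _ => smul_sub _ _ _)
  -- the master inequality at arbitrary pairs
  have hmaster : ∀ zp zq : auxIdx m → H,
      (∑ i : auxIdx m, ω ↑i * ‖(zp i - zq i)
          + α⁻¹ • ((rr zp i - xx zp) - (rr zq i - xx zq))‖ ^ 2
        ≤ ∑ i : auxIdx m, ω ↑i * ‖zp i - zq i‖ ^ 2) ∧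
      (∑ i : auxIdx m, ω ↑i * ‖(zp i - zq i) + ((rr zp i - xx zp) - (rr zq i - xx zq))‖ ^ 2
        ≤ ∑ i : auxIdx m, ω ↑i * ‖zp i - zq i‖ ^ 2
          - ∑ i : auxIdx m, ω ↑i * ‖(rr zp i - xx zp) - (rr zq i - xx zq)‖ ^ 2
          - (2 * β / γ) * ‖γ • (B (xx zp) - B (xx zq))‖ ^ 2
          - 2 * ⟪∑ j : auxIdx m, ω ↑j • ((rr zp j - xx zp) - (rr zq j - xx zq)),
              γ • (B (xx zp) - B (xx zq))⟫) := by
    intro zp zq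
    have hmono : ∀ i : auxIdx m, 0 ≤ ⟪(∑ j : auxIdx m, ω ↑j • (zp j - zq j))
        + ((rr zp i - xx zp) - (rr zq i - xx zq)),
        ((∑ j : auxIdx m, ω ↑j • (zp j - zq j)) - (zp i - zq i)
          - γ • (B (xx zp) - B (xx zq)))
          - ((rr zp i - xx zp) - (rr zq i - xx zq))⟫ := by
      intro i
      obtain ⟨u, hu, hequ⟩ := hJchar i ((2:ℝ) • xx zp - zp i - γ • B (xx zp))
      obtain ⟨u', hu', hequ'⟩ := hJchar i ((2:ℝ) • xx zq - zq i - γ • B (xx zq))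
      have e1 : (∑ j : auxIdx m, ω ↑j • (zp j - zq j))
          + ((rr zp i - xx zp) - (rr zq i - xx zq)) = rr zp i - rr zq i := by
        rw [hδsum zp zq]; abel
      have e2 : ((∑ j : auxIdx m, ω ↑j • (zp j - zq j)) - (zp i - zq i)
          - γ • (B (xx zp) - B (xx zq))) - ((rr zp i - xx zp) - (rr zq i - xx zq))
          = (((2:ℝ) • xx zp - zp i - γ • B (xx zp)) - rr zp i)
            - (((2:ℝ) • xx zq - zq i - γ • B (xx zq)) - rr zq i) := by
        rw [hδsum zp zq]; module
      rw [e1, e2]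
      have e3 : rr zp i = J ↑i ((2:ℝ) • xx zp - zp i - γ • B (xx zp)) := by
        simp only [hrrdef]
      have e4 : rr zq i = J ↑i ((2:ℝ) • xx zq - zq i - γ • B (xx zq)) := by
        simp only [hrrdef]
      rw [e3, e4, hequ, hequ', ← smul_sub, real_inner_smul_right]
      refine mul_nonneg (div_nonneg hγ0.le (hωp i).le) ?_
      exact (hA ↑i i.2).1 _ _ u u' hu hu'
    have hco : (β / γ) * ‖γ • (B (xx zp) - B (xx zq))‖ ^ 2
        ≤ ⟪(∑ j : auxIdx m, ω ↑j • (zp j - zq j)), γ • (B (xx zp) - B (xx zq))⟫ := by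
      rw [hδsum zp zq]
      have h1 := hB (xx zp) (xx zq)
      have h2 : ⟪xx zp - xx zq, γ • (B (xx zp) - B (xx zq))⟫
          = γ * ⟪xx zp - xx zq, B (xx zp) - B (xx zq)⟫ := real_inner_smul_right _ _ _
      have h3 : ‖γ • (B (xx zp) - B (xx zq))‖ ^ 2 = γ ^ 2 * ‖B (xx zp) - B (xx zq)‖ ^ 2 := by
        rw [norm_smul, Real.norm_eq_abs, mul_pow, sq_abs]
      rw [h2, h3]
      have h4 : β / γ * (γ ^ 2 * ‖B (xx zp) - B (xx zq)‖ ^ 2)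
          = γ * (β * ‖B (xx zp) - B (xx zq)‖ ^ 2) := by
        field_simp
      rw [h4]
      exact mul_le_mul_of_nonneg_left h1 hγ0.le
    exact aux_master (fun i : auxIdx m => ω ↑i) hωp hω1 β γ α hβ hγ0 hα0 hαcond
      (fun i => zp i - zq i) (fun i => (rr zp i - xx zp) - (rr zq i - xx zq))
      (γ • (B (xx zp) - B (xx zq))) hmono hco
  -- Step D : E-level objects
  set X : auxE H m → H := fun v => ∑ j : auxIdx m, σ j • v j with hXdef
  set ζ : ℕ → auxE H m := fun n => (WithLp.toLp 2 (fun i => σ i • z ↑i n) : auxE H m) with hζdef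
  set Nop : auxE H m → auxE H m := fun v =>
    (WithLp.toLp 2 (fun i => v i + α⁻¹ • (σ i • (J ↑i ((2:ℝ) • X v - (σ i)⁻¹ • v i - γ • B (X v)) - X v)))
      : auxE H m) with hNopdef
  have hωσ : ∀ (i : auxIdx m), ω ↑i * (σ i)⁻¹ = σ i := by
    intro i
    rw [← hσsq i]
    field_simp
  have hXxx : ∀ v : auxE H m, X v = xx (fun j => (σ j)⁻¹ • v j) := by
    intro v
    simp only [hXdef, hxxdef]
    refine Finset.sum_congr rfl (fun j _ => ?_)
    rw [smul_smul, hωσ j]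
  have hNopz : ∀ (v : auxE H m) (i : auxIdx m),
      Nop v i = v i + α⁻¹ • (σ i •
        (rr (fun j => (σ j)⁻¹ • v j) i - xx (fun j => (σ j)⁻¹ • v j))) := by
    intro v i
    simp only [hNopdef, hrrdef]
    rw [hXxx v]
  have hxxz : ∀ n, xx (fun j => z ↑j n) = x n := by
    intro n
    simp only [hxxdef]
    rw [hx n]
    exact Finset.sum_coe_sort (Finset.Icc 1 m) (fun i => ω i • z i n)
  have hback : ∀ n, (fun j => (σ j)⁻¹ • (ζ n) j) = (fun j : auxIdx m => z ↑j n) := by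
    intro n
    funext j
    simp only [hζdef]
    rw [inv_smul_smul₀ (hσp j).ne']
  have hXζ : ∀ n, X (ζ n) = x n := by
    intro n
    rw [hXxx (ζ n), hback n, hxxz n]
  -- nonexpansiveness of Nop
  have hNop_nonexp : ∀ v w' : auxE H m, ‖Nop v - Nop w'‖ ≤ ‖v - w'‖ := by
    intro v w'
    refine aux_sq_le _ _ (norm_nonneg _) (norm_nonneg _) ?_
    rw [PiLp.norm_sq_eq_of_L2, PiLp.norm_sq_eq_of_L2]
    set zp : auxIdx m → H := fun j => (σ j)⁻¹ • v j with hzp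
    set zq : auxIdx m → H := fun j => (σ j)⁻¹ • w' j with hzq
    have hv : ∀ i, v i = σ i • zp i := by
      intro i; simp only [hzp]; rw [smul_inv_smul₀ (hσp i).ne']
    have hw' : ∀ i, w' i = σ i • zq i := by
      intro i; simp only [hzq]; rw [smul_inv_smul₀ (hσp i).ne']
    have e1 : ∀ i, (Nop v - Nop w') i
        = σ i • ((zp i - zq i) + α⁻¹ • ((rr zp i - xx zp) - (rr zq i - xx zq))) := by
      intro i
      rw [PiLp.sub_apply, hNopz v i, hNopz w' i]
      rw [show (fun j => (σ j)⁻¹ • v j) = zp from rfl, show (fun j => (σ j)⁻¹ • w' j) = zq from rfl]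
      rw [hv i, hw' i]
      module
    have e2 : ∀ i, (v - w') i = σ i • (zp i - zq i) := by
      intro i
      rw [PiLp.sub_apply, hv i, hw' i, smul_sub]
    calc ∑ i : auxIdx m, ‖(Nop v - Nop w') i‖ ^ 2
        = ∑ i : auxIdx m, ω ↑i * ‖(zp i - zq i)
            + α⁻¹ • ((rr zp i - xx zp) - (rr zq i - xx zq))‖ ^ 2 := by
          refine Finset.sum_congr rfl (fun i _ => ?_)
          rw [e1 i, norm_smul, Real.norm_eq_abs, abs_of_pos (hσp i), mul_pow, hσsq' i]
      _ ≤ ∑ i : auxIdx m, ω ↑i * ‖zp i - zq i‖ ^ 2 := (hmaster zp zq).1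
      _ = ∑ i : auxIdx m, ‖(v - w') i‖ ^ 2 := by
          refine Finset.sum_congr rfl (fun i _ => ?_)
          rw [e2 i, norm_smul, Real.norm_eq_abs, abs_of_pos (hσp i), mul_pow, hσsq' i]
  -- Step E : recurrence data
  set μ : ℕ → ℝ := fun n => α * lam n with hμdef
  set η : ℕ → auxE H m := fun n => (WithLp.toLp 2 (fun i => α⁻¹ • (σ i •
      ((J ↑i (s ↑i n) - J ↑i ((2:ℝ) • x n - z ↑i n - γ • B (x n))) + b ↑i n))) : auxE H m)
    with hηdef
  have hμ0 : ∀ n, 0 < μ n := fun n => mul_pos hα0 (hlam n).1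
  have hμ1 : ∀ n, μ n ≤ 1 := by
    intro n
    have h1 := (hlam n).2
    have h2 : α * lam n < α * (1 / α) := by
      exact mul_lt_mul_of_pos_left h1 hα0
    rw [mul_one_div, div_self hα0.ne'] at h2
    exact h2.le
  have hrecE : ∀ n, ζ (n + 1) = ζ n + μ n • (Nop (ζ n) - ζ n + η n) := by
    intro n
    ext i
    have hL : ζ (n + 1) i = σ i • (z ↑i n + lam n • (J ↑i (s ↑i n) + b ↑i n - x n)) := by
      simp only [hζdef]
      rw [hzr n ↑i i.2, hp n ↑i i.2]
    rw [hL]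
    have hR : (ζ n + μ n • (Nop (ζ n) - ζ n + η n)) i
        = ζ n i + μ n • ((Nop (ζ n) i - ζ n i) + η n i) := by
      rw [PiLp.add_apply, PiLp.smul_apply, PiLp.add_apply, PiLp.sub_apply]
    rw [hR, hNopz (ζ n) i, hback n, hxxz n]
    have hrrz : rr (fun j => z ↑j n) i = J ↑i ((2:ℝ) • x n - z ↑i n - γ • B (x n)) := by
      simp only [hrrdef, hxxz n]
    rw [hrrz]
    simp only [hζdef, hηdef, hμdef]
    match_scalars <;> (field_simp; try ring)
  -- error summability
  have hηle : ∀ n (i : auxIdx m), μ n * ‖η n i‖ ≤ (γ + 1) * (lam n * (‖a n‖ + ‖b ↑i n‖)) := by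
    intro n i
    have he1 : ‖(J ↑i (s ↑i n) - J ↑i ((2:ℝ) • x n - z ↑i n - γ • B (x n))) + b ↑i n‖
        ≤ γ * ‖a n‖ + ‖b ↑i n‖ := by
      refine (norm_add_le _ _).trans ?_
      have h2 := hJnonexp i (s ↑i n) ((2:ℝ) • x n - z ↑i n - γ • B (x n))
      have h3 : s ↑i n - ((2:ℝ) • x n - z ↑i n - γ • B (x n)) = -(γ • a n) := by
        rw [hs n ↑i i.2]; module
      rw [h3] at h2
      rw [norm_neg, norm_smul, Real.norm_eq_abs, abs_of_pos hγ0] at h2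
      linarith
    have he2 : ‖η n i‖ = α⁻¹ * (σ i *
        ‖(J ↑i (s ↑i n) - J ↑i ((2:ℝ) • x n - z ↑i n - γ • B (x n))) + b ↑i n‖) := by
      simp only [hηdef]
      rw [norm_smul, norm_smul, Real.norm_eq_abs, Real.norm_eq_abs,
        abs_of_pos (inv_pos.mpr hα0), abs_of_pos (hσp i)]
    have hμη : μ n * ‖η n i‖ = lam n * (σ i *
        ‖(J ↑i (s ↑i n) - J ↑i ((2:ℝ) • x n - z ↑i n - γ • B (x n))) + b ↑i n‖) := by
      rw [he2]
      simp only [hμdef]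
      field_simp
    rw [hμη]
    have hlam0 := (hlam n).1
    have hb0 : (0:ℝ) ≤ ‖(J ↑i (s ↑i n) - J ↑i ((2:ℝ) • x n - z ↑i n - γ • B (x n))) + b ↑i n‖ :=
      norm_nonneg _
    have hσ1 := hσle1 i
    have t1 : σ i * ‖(J ↑i (s ↑i n) - J ↑i ((2:ℝ) • x n - z ↑i n - γ • B (x n))) + b ↑i n‖
        ≤ ‖(J ↑i (s ↑i n) - J ↑i ((2:ℝ) • x n - z ↑i n - γ • B (x n))) + b ↑i n‖ :=
      mul_le_of_le_one_left hb0 hσ1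
    have t2 : ‖(J ↑i (s ↑i n) - J ↑i ((2:ℝ) • x n - z ↑i n - γ • B (x n))) + b ↑i n‖
        ≤ (γ + 1) * (‖a n‖ + ‖b ↑i n‖) := by
      nlinarith [he1, norm_nonneg (a n), norm_nonneg (b ↑i n),
        mul_nonneg hγ0.le (norm_nonneg (b ↑i n))]
    refine le_trans (mul_le_mul_of_nonneg_left (t1.trans t2) hlam0.le) (le_of_eq (by ring))
  have hημsum : Summable (fun n => μ n * ‖η n‖) := by
    have hmaj : Summable (fun n => ∑ i ∈ Finset.Icc 1 m, (γ + 1) * (lam n * (‖a n‖ + ‖b i n‖))) :=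
      summable_sum (fun i hi => (herr i hi).mul_left (γ + 1))
    refine Summable.of_nonneg_of_le
      (fun n => mul_nonneg (hμ0 n).le (norm_nonneg _)) (fun n => ?_) hmaj
    calc μ n * ‖η n‖ ≤ μ n * ∑ i : auxIdx m, ‖η n i‖ :=
          mul_le_mul_of_nonneg_left (aux_pinorm_le_sum _) (hμ0 n).le
      _ = ∑ i : auxIdx m, μ n * ‖η n i‖ := Finset.mul_sum _ _ _
      _ ≤ ∑ i : auxIdx m, (γ + 1) * (lam n * (‖a n‖ + ‖b ↑i n‖)) :=
          Finset.sum_le_sum (fun i _ => hηle n i)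
      _ = ∑ i ∈ Finset.Icc 1 m, (γ + 1) * (lam n * (‖a n‖ + ‖b i n‖)) :=
          Finset.sum_coe_sort (Finset.Icc 1 m) (fun i => (γ + 1) * (lam n * (‖a n‖ + ‖b i n‖)))
  have hdivE : ¬ Summable (fun n => μ n * (1 - μ n)) := by
    intro hcon
    apply hdiv
    have h2 := hcon.mul_left α⁻¹
    refine h2.congr (fun n => ?_)
    simp only [hμdef]
    field_simp
  -- Step F : fixed point from the solution
  obtain ⟨xs, us, hus, hsum0⟩ := hsol
  set zs : auxIdx m → H := fun i => xs - γ • B xs - (γ / ω ↑i) • us ↑i with hzs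
  set ζs : auxE H m := (WithLp.toLp 2 (fun i => σ i • zs i) : auxE H m) with hζsdef
  have hsumus : ∑ i : auxIdx m, us ↑i = - B xs := by
    rw [Finset.sum_coe_sort]
    exact eq_neg_of_add_eq_zero_left hsum0
  have hxxzs : xx zs = xs := by
    simp only [hxxdef, hzs]
    have e1 : ∀ i ∈ Finset.univ (α := auxIdx m),
        ω ↑i • (xs - γ • B xs - (γ / ω ↑i) • us ↑i)
        = ω ↑i • (xs - γ • B xs) - γ • us ↑i := by
      intro i _
      rw [smul_sub, smul_smul]
      have : ω ↑i * (γ / ω ↑i) = γ := by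
        field_simp [(hωp i).ne']
      rw [this]
    rw [Finset.sum_congr rfl e1, Finset.sum_sub_distrib, ← Finset.sum_smul, hω1, one_smul,
      ← Finset.smul_sum, hsumus, smul_neg]
    module
  have hrrzs : ∀ i, rr zs i = xs := by
    intro i
    have e3 : rr zs i = J ↑i ((2:ℝ) • xx zs - zs i - γ • B (xx zs)) := by
      simp only [hrrdef]
    rw [e3, hxxzs]
    apply (hJ ↑i i.2 _ xs).mpr
    refine ⟨us ↑i, hus ↑i i.2, ?_⟩
    simp only [hzs]
    module
  have hfixζs : Nop ζs = ζs := by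
    ext i
    rw [hNopz ζs i]
    have hbs : (fun j => (σ j)⁻¹ • ζs j) = zs := by
      funext j
      simp only [hζsdef]
      rw [inv_smul_smul₀ (hσp j).ne']
    rw [hbs, hrrzs i, hxxzs, sub_self, smul_zero, smul_zero, add_zero]
  -- Step G : apply the abstract convergence theorem
  obtain ⟨w, hwfix, hweak, hres, hconv⟩ :=
    aux_weak_conv_KM Nop hNop_nonexp μ hμ0 hμ1 η hημsum hdivE ζ hrecE ζs hfixζs
  -- Step H : identify the weak limit as a zero of the sum
  set zb : auxIdx m → H := fun i => (σ i)⁻¹ • w i with hzb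
  have hwz : ∀ i, w i = σ i • zb i := by
    intro i; simp only [hzb]; rw [smul_inv_smul₀ (hσp i).ne']
  have hXw : X w = xx zb := hXxx w
  set xbar : H := X w with hxbar
  have hxxzb : xx zb = xbar := hXw.symm
  have hfixi : ∀ i, rr zb i = xbar := by
    intro i
    have h1 : Nop w i = w i := congrArg (fun v : auxE H m => v i) hwfix
    rw [hNopz w i] at h1
    have hbw : (fun j => (σ j)⁻¹ • w j) = zb := rfl
    rw [hbw, hxxzb] at h1
    have h2 : α⁻¹ • (σ i • (rr zb i - xbar)) = 0 := by
      have := add_eq_left.mp h1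
      exact this
    rcases smul_eq_zero.mp h2 with h3 | h3
    · exact absurd h3 (inv_ne_zero hα0.ne')
    · rcases smul_eq_zero.mp h3 with h4 | h4
      · exact absurd h4 (hσp i).ne'
      · exact sub_eq_zero.mp h4
  have hargJ : ∀ i : auxIdx m, J ↑i ((2:ℝ) • xbar - zb i - γ • B xbar) = xbar := by
    intro i
    have := hfixi i
    simp only [hrrdef, hxxzb] at this
    exact this
  have hubar : ∀ i : auxIdx m, ∃ ub ∈ A ↑i xbar,
      ((2:ℝ) • xbar - zb i - γ • B xbar) - xbar = (γ / ω ↑i) • ub :=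
    fun i => (hJ ↑i i.2 _ xbar).mp (hargJ i)
  set u : ℕ → H := fun k => if h : k ∈ Finset.Icc 1 m
    then (ω k / γ) • (xbar - zb ⟨k, h⟩ - γ • B xbar) else 0 with hudef
  have huval : ∀ i : auxIdx m, u ↑i = (ω ↑i / γ) • (xbar - zb i - γ • B xbar) := by
    intro i
    simp only [hudef, i.2, dif_pos, Subtype.coe_eta]
  have humem : ∀ i ∈ Finset.Icc 1 m, u i ∈ A i xbar := by
    intro i hi
    obtain ⟨ub, hub, hequb⟩ := hubar ⟨i, hi⟩
    have e5 : xbar - zb ⟨i, hi⟩ - γ • B xbar = (γ / ω i) • ub := by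
      rw [← hequb]; module
    have e6 : u i = ub := by
      rw [huval ⟨i, hi⟩, e5, smul_smul]
      have : ω i / γ * (γ / ω i) = 1 := by
        field_simp [(hω i hi).1.ne', hγ0.ne']
      rw [this, one_smul]
    rw [e6]; exact hub
  have husum : (∑ i ∈ Finset.Icc 1 m, u i) + B xbar = 0 := by
    have e7 : ∑ i ∈ Finset.Icc 1 m, u i = ∑ i : auxIdx m, u ↑i :=
      (Finset.sum_coe_sort (Finset.Icc 1 m) u).symm
    have e8 : ∑ i : auxIdx m, u ↑i = - B xbar := by
      rw [Finset.sum_congr rfl (fun i _ => huval i)]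
      have e9 : ∀ i ∈ Finset.univ (α := auxIdx m),
          (ω ↑i / γ) • (xbar - zb i - γ • B xbar)
          = γ⁻¹ • (ω ↑i • xbar - ω ↑i • zb i) - ω ↑i • B xbar := by
        intro i _
        match_scalars <;> field_simp
      rw [Finset.sum_congr rfl e9, Finset.sum_sub_distrib, ← Finset.smul_sum,
        ← Finset.sum_smul, hω1, one_smul, Finset.sum_sub_distrib, ← Finset.sum_smul, hω1,
        one_smul]
      have e10 : ∑ i : auxIdx m, ω ↑i • zb i = xbar := by
        rw [← hxxzb]
      rw [e10, sub_self, smul_zero, zero_sub]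
    rw [e7, e8]; abel
  -- shared quantities for the convergence conclusions
  obtain ⟨l, hl⟩ := hconv w hwfix
  obtain ⟨M', hM'⟩ : ∃ M', ∀ n, ‖ζ n - w‖ ≤ M' := by
    obtain ⟨M', hM'⟩ := hl.bddAbove_range
    exact ⟨M', fun n => hM' ⟨n, rfl⟩⟩
  set K : ℝ := ∑ i : auxIdx m, σ i with hKdef
  have hK0 : 0 ≤ K := Finset.sum_nonneg fun i _ => (hσp i).le
  have hXlip : ∀ v v' : auxE H m, ‖X v - X v'‖ ≤ K * ‖v - v'‖ := by
    intro v v'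
    have e : X v - X v' = ∑ i : auxIdx m, σ i • ((v - v') i) := by
      simp only [hXdef]
      rw [← Finset.sum_sub_distrib]
      refine Finset.sum_congr rfl fun i _ => ?_
      rw [PiLp.sub_apply, smul_sub]
    rw [e, hKdef, Finset.sum_mul]
    refine (norm_sum_le _ _).trans (Finset.sum_le_sum fun i _ => ?_)
    rw [norm_smul, Real.norm_eq_abs, abs_of_pos (hσp i)]
    exact mul_le_mul_of_nonneg_left (aux_apply_norm_le _ i) (hσp i).le
  set En : ℕ → auxE H m := fun n => α • (Nop (ζ n) - ζ n) with hEndef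
  have hEni : ∀ n (i : auxIdx m),
      En n i = σ i • (rr (fun j : auxIdx m => z ↑j n) i - x n) := by
    intro n i
    simp only [hEndef]
    rw [PiLp.smul_apply, PiLp.sub_apply, hNopz (ζ n) i, hback n, hxxz n]
    match_scalars <;> (field_simp; try ring)
  have hEnlim : Tendsto (fun n => ‖En n‖) atTop (nhds 0) := by
    have h1 : ∀ n, α * ‖ζ n - Nop (ζ n)‖ = ‖En n‖ := by
      intro n; simp only [hEndef]
      rw [norm_smul, Real.norm_eq_abs, abs_of_pos hα0, norm_sub_rev]
    have h2 := hres.const_mul α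
    rw [mul_zero] at h2
    exact Tendsto.congr h1 h2
  refine ⟨xbar, ⟨u, humem, husum⟩, ?_, ?_, ?_⟩
  · -- weak convergence
    intro y
    set Y : auxE H m := (WithLp.toLp 2 (fun i => σ i • y) : auxE H m) with hYdef
    have hYn : ∀ n, ⟪x n, y⟫ = ⟪ζ n, Y⟫ := by
      intro n
      rw [PiLp.inner_apply, hx n,
        ← Finset.sum_coe_sort (Finset.Icc 1 m) (fun i => ω i • z i n), sum_inner]
      refine Finset.sum_congr rfl (fun i _ => ?_)
      simp only [hζdef, hYdef]
      rw [real_inner_smul_left, real_inner_smul_left, real_inner_smul_right, ← hσsq i]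
      ring
    have hYw : ⟪xbar, y⟫ = ⟪w, Y⟫ := by
      rw [PiLp.inner_apply]
      simp only [hxbar, hXdef]
      rw [sum_inner]
      refine Finset.sum_congr rfl fun i _ => ?_
      simp only [hYdef]
      rw [real_inner_smul_left, real_inner_smul_right]
    rw [hYw]
    exact (hweak Y).congr (fun n => (hYn n).symm)
  · -- strong convergence of B (x n)
    have hBlip : ∀ u' v' : H, ‖B u' - B v'‖ ≤ β⁻¹ * ‖u' - v'‖ := by
      intro u' v'
      by_cases hz : ‖B u' - B v'‖ = 0
      · rw [hz]; positivity
      · have hz' : 0 < ‖B u' - B v'‖ := lt_of_le_of_ne (norm_nonneg _) (Ne.symm hz)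
        have h1 := hB u' v'
        have h2 : ⟪u' - v', B u' - B v'⟫ ≤ ‖u' - v'‖ * ‖B u' - B v'‖ :=
          real_inner_le_norm _ _
        rw [inv_mul_eq_div, le_div_iff₀ hβ]
        nlinarith
    have hxbnd : ∀ n, ‖x n - xbar‖ ≤ K * M' := by
      intro n
      have h1 : x n - xbar = X (ζ n) - X w := by rw [hXζ n, hxbar]
      rw [h1]
      refine (hXlip _ _).trans ?_
      exact mul_le_mul_of_nonneg_left (hM' n) hK0
    have hgbnd : ∀ n, γ * ‖B (x n) - B xbar‖ ≤ γ * (β⁻¹ * (K * M')) := by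
      intro n
      refine mul_le_mul_of_nonneg_left ?_ hγ0.le
      refine (hBlip _ _).trans ?_
      exact mul_le_mul_of_nonneg_left (hxbnd n) (inv_pos.mpr hβ).le
    have hkey : ∀ n, (2*β/γ) * ‖γ • (B (x n) - B xbar)‖^2
        ≤ ‖ζ n - w‖^2 - ‖(ζ n - w) + En n‖^2 - ‖En n‖^2
          + 2 * ((K * ‖En n‖) * (γ * ‖B (x n) - B xbar‖)) := by
      intro n
      have hm2 := (hmaster (fun j : auxIdx m => z ↑j n) zb).2
      rw [hxxz n, hxxzb] at hm2
      have hz0 : ∀ i : auxIdx m, rr zb i - xbar = 0 := fun i => sub_eq_zero.mpr (hfixi i)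
      simp only [hz0, sub_zero] at hm2
      have tA : ∑ i : auxIdx m, ω ↑i * ‖z ↑i n - zb i‖^2 = ‖ζ n - w‖^2 := by
        rw [PiLp.norm_sq_eq_of_L2]
        refine Finset.sum_congr rfl fun i _ => ?_
        have e : (ζ n - w) i = σ i • (z ↑i n - zb i) := by
          rw [PiLp.sub_apply, hwz i]
          simp only [hζdef]
          rw [smul_sub]
        rw [e, norm_smul, Real.norm_eq_abs, abs_of_pos (hσp i), mul_pow, hσsq' i]
      have tB : ∑ i : auxIdx m, ω ↑i * ‖(z ↑i n - zb i)
          + (rr (fun j : auxIdx m => z ↑j n) i - x n)‖^2 = ‖(ζ n - w) + En n‖^2 := by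
        rw [PiLp.norm_sq_eq_of_L2]
        refine Finset.sum_congr rfl fun i _ => ?_
        have e : ((ζ n - w) + En n) i
            = σ i • ((z ↑i n - zb i) + (rr (fun j : auxIdx m => z ↑j n) i - x n)) := by
          rw [PiLp.add_apply, PiLp.sub_apply, hwz i, hEni n i]
          simp only [hζdef]
          module
        rw [e, norm_smul, Real.norm_eq_abs, abs_of_pos (hσp i), mul_pow, hσsq' i]
      have tC : ∑ i : auxIdx m, ω ↑i * ‖rr (fun j : auxIdx m => z ↑j n) i - x n‖^2
          = ‖En n‖^2 := by
        rw [PiLp.norm_sq_eq_of_L2]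
        refine Finset.sum_congr rfl fun i _ => ?_
        rw [hEni n i, norm_smul, Real.norm_eq_abs, abs_of_pos (hσp i), mul_pow, hσsq' i]
      have tS : -(2 * ⟪∑ j : auxIdx m, ω ↑j • (rr (fun j : auxIdx m => z ↑j n) j - x n),
          γ • (B (x n) - B xbar)⟫)
          ≤ 2 * ((K * ‖En n‖) * (γ * ‖B (x n) - B xbar‖)) := by
        have h1 : ‖∑ j : auxIdx m, ω ↑j • (rr (fun j : auxIdx m => z ↑j n) j - x n)‖
            ≤ K * ‖En n‖ := by
          refine (norm_sum_le _ _).trans ?_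
          rw [hKdef, Finset.sum_mul]
          refine Finset.sum_le_sum fun j _ => ?_
          have e : ω ↑j • (rr (fun j : auxIdx m => z ↑j n) j - x n) = σ j • (En n j) := by
            rw [hEni n j, smul_smul, hσsq j]
          rw [e, norm_smul, Real.norm_eq_abs, abs_of_pos (hσp j)]
          exact mul_le_mul_of_nonneg_left (aux_apply_norm_le _ j) (hσp j).le
        have h3 : ‖γ • (B (x n) - B xbar)‖ = γ * ‖B (x n) - B xbar‖ := by
          rw [norm_smul, Real.norm_eq_abs, abs_of_pos hγ0]
        have h4 : -⟪∑ j : auxIdx m, ω ↑j • (rr (fun j : auxIdx m => z ↑j n) j - x n),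
            γ • (B (x n) - B xbar)⟫
            ≤ ‖∑ j : auxIdx m, ω ↑j • (rr (fun j : auxIdx m => z ↑j n) j - x n)‖
              * ‖γ • (B (x n) - B xbar)‖ :=
          (neg_le_abs _).trans (abs_real_inner_le_norm _ _)
        have h5 := mul_le_mul_of_nonneg_right h1 (norm_nonneg (γ • (B (x n) - B xbar)))
        rw [h3] at h5
        rw [h3] at h4
        linarith
      rw [tA, tB, tC] at hm2
      linarith [hm2, tS]
    have hAlim : Tendsto (fun n => ‖ζ n - w‖^2) atTop (nhds (l^2)) := hl.pow 2
    have hinlim : Tendsto (fun n => ⟪ζ n - w, En n⟫) atTop (nhds 0) := by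
      refine squeeze_zero_norm (a := fun n => M' * ‖En n‖) (fun n => ?_) ?_
      · exact (abs_real_inner_le_norm _ _).trans
          (mul_le_mul_of_nonneg_right (hM' n) (norm_nonneg _))
      · have := hEnlim.const_mul M'
        rw [mul_zero] at this
        exact this
    have hElim2 : Tendsto (fun n => ‖En n‖^2) atTop (nhds 0) := by
      have := hEnlim.pow 2
      simpa using this
    have hBlim : Tendsto (fun n => ‖(ζ n - w) + En n‖^2) atTop (nhds (l^2)) := by
      have hexp : ∀ n, ‖ζ n - w‖^2 + 2*⟪ζ n - w, En n⟫ + ‖En n‖^2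
          = ‖(ζ n - w) + En n‖^2 := fun n => (norm_add_sq_real _ _).symm
      have h5 := (hAlim.add (hinlim.const_mul 2)).add hElim2
      have h6 := Tendsto.congr hexp h5
      simpa using h6
    set Cg : ℝ := γ * (β⁻¹ * (K * M')) with hCg
    have hupper : ∀ n, (2*β/γ) * ‖γ • (B (x n) - B xbar)‖^2
        ≤ ‖ζ n - w‖^2 - ‖(ζ n - w) + En n‖^2 - ‖En n‖^2 + (2 * Cg * K) * ‖En n‖ := by
      intro n
      refine (hkey n).trans ?_
      have h7 : (K * ‖En n‖) * (γ * ‖B (x n) - B xbar‖) ≤ (K * ‖En n‖) * Cg :=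
        mul_le_mul_of_nonneg_left (hgbnd n) (mul_nonneg hK0 (norm_nonneg _))
      nlinarith [h7]
    have hulim : Tendsto (fun n => ‖ζ n - w‖^2 - ‖(ζ n - w) + En n‖^2 - ‖En n‖^2
        + (2 * Cg * K) * ‖En n‖) atTop (nhds 0) := by
      have h8 := ((hAlim.sub hBlim).sub hElim2).add (hEnlim.const_mul (2 * Cg * K))
      simpa using h8
    have hG2 : Tendsto (fun n => (2*β/γ) * ‖γ • (B (x n) - B xbar)‖^2) atTop (nhds 0) := by
      refine squeeze_zero (fun n => ?_) hupper hulim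
      exact mul_nonneg (div_nonneg (by linarith) hγ0.le) (sq_nonneg _)
    have hG3 : Tendsto (fun n => ‖B (x n) - B xbar‖^2) atTop (nhds 0) := by
      have hc : ∀ n, (2*β*γ)⁻¹ * ((2*β/γ) * ‖γ • (B (x n) - B xbar)‖^2)
          = ‖B (x n) - B xbar‖^2 := by
        intro n
        rw [norm_smul, Real.norm_eq_abs, abs_of_pos hγ0, mul_pow]
        field_simp
      have h9 := hG2.const_mul (2*β*γ)⁻¹
      rw [mul_zero] at h9
      exact Tendsto.congr hc h9
    have hnorm : Tendsto (fun n => ‖B (x n) - B xbar‖) atTop (nhds 0) := by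
      have h10 := hG3.sqrt
      rw [Real.sqrt_zero] at h10
      exact Tendsto.congr (fun n => Real.sqrt_sq (norm_nonneg _)) h10
    exact tendsto_iff_norm_sub_tendsto_zero.mpr hnorm
  · -- x (n+1) - x n → 0
    have hxd : ∀ n, ‖x (n+1) - x n‖ ≤ K * (‖ζ n - Nop (ζ n)‖ + μ n * ‖η n‖) := by
      intro n
      have h1 : x (n+1) - x n = X (ζ (n+1)) - X (ζ n) := by rw [hXζ (n+1), hXζ n]
      rw [h1]
      refine (hXlip _ _).trans ?_
      refine mul_le_mul_of_nonneg_left ?_ hK0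
      have h2 : ζ (n+1) - ζ n = μ n • (Nop (ζ n) - ζ n + η n) := by
        rw [hrecE n]; abel
      rw [h2, norm_smul, Real.norm_eq_abs, abs_of_pos (hμ0 n)]
      have h3 : ‖Nop (ζ n) - ζ n + η n‖ ≤ ‖Nop (ζ n) - ζ n‖ + ‖η n‖ := norm_add_le _ _
      have h4 : μ n * ‖Nop (ζ n) - ζ n‖ ≤ ‖ζ n - Nop (ζ n)‖ := by
        rw [norm_sub_rev (ζ n)]
        exact mul_le_of_le_one_left (norm_nonneg _) (hμ1 n)
      have h5 : 0 < μ n := hμ0 n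
      calc μ n * ‖Nop (ζ n) - ζ n + η n‖
          ≤ μ n * (‖Nop (ζ n) - ζ n‖ + ‖η n‖) := mul_le_mul_of_nonneg_left h3 h5.le
        _ = μ n * ‖Nop (ζ n) - ζ n‖ + μ n * ‖η n‖ := mul_add _ _ _
        _ ≤ ‖ζ n - Nop (ζ n)‖ + μ n * ‖η n‖ := add_le_add_left h4 _
    refine squeeze_zero_norm hxd ?_
    have h6 := (hres.add (hημsum.tendsto_atTop_zero)).const_mul K
    simpa using h6
end

section
/- Let H be a real Hilbert space, let A_1, A_2 : H → 2^H be maximally monotone with zer(A_1 + A_2) = {x : 0 ∈ A_1 x + A_2 x} nonempty, let γ > 0, let (λ_n) be a sequence in (0, 3/2), and let (b_{1,n}) and (b_{2,n}) be sequences in H such that Σ_n λ_n(3 − 2λ_n) = +∞ and Σ_n λ_n‖b_{i,n}‖ < +∞ for i = 1, 2. Let (z_{1,0}, z_{2,0}) ∈ H × H and for every n ∈ ℕ set x_n = (z_{1,n} + z_{2,n})/2, p_{1,n} = J_{2γA_1}(z_{2,n}) + b_{1,n}, p_{2,n} = J_{2γA_2}(z_{1,n}) + b_{2,n}, z_{1,n+1}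 = z_{1,n} + λ_n(p_{1,n} − x_n), z_{2,n+1} = z_{2,n} + λ_n(p_{2,n} − x_n). Then there exists x̄ ∈ zer(A_1 + A_2) such that x_n converges weakly to x̄ and x_{n+1} − x_n → 0 strongly. -/
open Filter Topology
open scoped RealInnerProductSpace Pointwise

variable {H : Type*} [NormedAddCommGroup H] [InnerProductSpace ℝ H] [CompleteSpace H]

/-- A nonnegative sequence with summable increments converges. -/
lemma km_conv_of_perturb (a ε : ℕ → ℝ) (ha : ∀ n, 0 ≤ a n) (hε : ∀ n, 0 ≤ ε n)
    (hsum : Summable ε) (hrec : ∀ n, a (n + 1) ≤ a n + ε n) :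
    ∃ L, Tendsto a atTop (𝓝 L) := by
  set t : ℕ → ℝ := fun n => ∑' k, ε (k + n) with ht
  have htail : ∀ n, t n = ε n + t (n + 1) := by
    intro n
    have h1 : Summable (fun k => ε (k + n)) := (summable_nat_add_iff n).2 hsum
    have := (Summable.tsum_eq_zero_add h1)
    simpa [ht, add_comm, add_left_comm, add_assoc] using this
  have hb_anti : Antitone (fun n => a n + t n) := by
    apply antitone_nat_of_succ_le
    intro n
    have := hrec n
    have := htail n
    nlinarith [hrec n, htail n]
  have hb_bdd : BddBelow (Set.range (fun n => a n + t n)) := by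
    refine ⟨0, ?_⟩
    rintro x ⟨n, rfl⟩
    have : 0 ≤ t n := tsum_nonneg (fun k => hε _)
    have := ha n
    positivity
  have hb := tendsto_atTop_ciInf hb_anti hb_bdd
  have htz : Tendsto t atTop (𝓝 0) := tendsto_sum_nat_add ε
  refine ⟨(⨅ n, (a n + t n)) - 0, ?_⟩
  have := hb.sub htz
  simpa using this

lemma km_combo_sq {K : Type*} [NormedAddCommGroup K] [InnerProductSpace ℝ K]
    (t : ℝ) (a b : K) :
    ‖(1 - t) • a + t • b‖ ^ 2
      = (1 - t) * ‖a‖ ^ 2 + t * ‖b‖ ^ 2 - t * (1 - t) * ‖a - b‖ ^ 2 := by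
  rw [← real_inner_self_eq_norm_sq, ← real_inner_self_eq_norm_sq,
    ← real_inner_self_eq_norm_sq, ← real_inner_self_eq_norm_sq]
  simp only [inner_add_left, inner_add_right, inner_sub_left, inner_sub_right,
    real_inner_smul_left, real_inner_smul_right]
  rw [real_inner_comm b a]
  ring

lemma km_sub_le_add {K : Type*} [NormedAddCommGroup K] [InnerProductSpace ℝ K]
    (s u : K) (h : 0 ≤ ⟪s, u⟫) : ‖s - u‖ ≤ ‖s + u‖ := by
  have h1 : ‖s - u‖ ^ 2 ≤ ‖s + u‖ ^ 2 := by
    rw [← real_inner_self_eq_norm_sq, ← real_inner_self_eq_norm_sq]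
    simp only [inner_add_left, inner_add_right, inner_sub_left, inner_sub_right]
    have hc : ⟪u, s⟫ = ⟪s, u⟫ := real_inner_comm s u
    linarith
  calc ‖s - u‖ = Real.sqrt (‖s - u‖ ^ 2) := by rw [Real.sqrt_sq (norm_nonneg _)]
    _ ≤ Real.sqrt (‖s + u‖ ^ 2) := Real.sqrt_le_sqrt h1
    _ = ‖s + u‖ := Real.sqrt_sq (norm_nonneg _)

/-- Weak sequential compactness of bounded sequences in a real Hilbert space. -/
lemma km_weak_compact {K : Type*} [NormedAddCommGroup K] [InnerProductSpace ℝ K]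
    [CompleteSpace K] (z : ℕ → K) (M : ℝ) (hb : ∀ n, ‖z n‖ ≤ M) :
    ∃ (w : K) (φ : ℕ → ℕ), StrictMono φ ∧
      ∀ y : K, Tendsto (fun k => ⟪z (φ k), y⟫) atTop (𝓝 ⟪w, y⟫) := by
  have hM0 : (0 : ℝ) ≤ M := (norm_nonneg (z 0)).trans (hb 0)
  set M' : ℝ := M + 1 with hM'def
  have hM'pos : 0 < M' := by linarith
  have hM' : ∀ n, ‖z n‖ ≤ M' := fun n => (hb n).trans (by linarith)
  -- the closed span of the sequence
  set V : Submodule ℝ K := (Submodule.span ℝ (Set.range z)).topologicalClosure with hV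
  have hzV : ∀ n, z n ∈ V := fun n =>
    Submodule.le_topologicalClosure _ (Submodule.subset_span ⟨n, rfl⟩)
  haveI : CompleteSpace V :=
    (Submodule.isClosed_topologicalClosure _).completeSpace_coe
  -- a countable set whose closure contains V
  have hsep : TopologicalSpace.IsSeparable (V : Set K) := by
    rw [hV, Submodule.topologicalClosure_coe]
    exact ((Set.countable_range z).isSeparable.span).closure
  obtain ⟨c, hc_count, hc_sub⟩ := hsep
  have hc'_count : (insert (0 : K) c).Countable := hc_count.insert 0
  obtain ⟨e, he⟩ := hc'_count.exists_eq_range ⟨0, Set.mem_insert 0 c⟩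
  have hVc : (V : Set K) ⊆ closure (Set.range e) := by
    rw [← he]
    exact hc_sub.trans (closure_mono (Set.subset_insert _ _))
  -- diagonal extraction via compactness of a product of intervals
  set S : Set (ℕ → ℝ) := Set.univ.pi fun j => Set.Icc (-(M' * ‖e j‖)) (M' * ‖e j‖) with hS
  have hScomp : IsCompact S := isCompact_univ_pi fun j => isCompact_Icc
  have hFS : ∀ n, (fun j => ⟪z n, e j⟫) ∈ S := by
    intro n
    rw [hS, Set.mem_univ_pi]
    intro j
    have h1 : |⟪z n, e j⟫| ≤ M' * ‖e j‖ := by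
      calc |⟪z n, e j⟫| ≤ ‖z n‖ * ‖e j‖ := abs_real_inner_le_norm _ _
        _ ≤ M' * ‖e j‖ := by
            exact mul_le_mul_of_nonneg_right (hM' n) (norm_nonneg _)
    exact ⟨neg_le_of_abs_le h1, le_of_abs_le h1⟩
  obtain ⟨g, -, φ, hφ, hconv⟩ := hScomp.tendsto_subseq hFS
  have hconvj : ∀ j, Tendsto (fun k => ⟪z (φ k), e j⟫) atTop (𝓝 (g j)) := by
    intro j
    exact (tendsto_pi_nhds.1 hconv) j
  -- the extracted subsequence is weakly Cauchy
  have hCauchy : ∀ y : K, CauchySeq fun k => ⟪z (φ k), y⟫ := by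
    intro y
    set q : K := (Submodule.orthogonalProjection V y : K) with hq
    have hinner_eq : ∀ n, ⟪z n, y⟫ = ⟪z n, q⟫ := by
      intro n
      have hmem : y - q ∈ Vᗮ := V.sub_starProjection_mem_orthogonal y
      have h0 : ⟪z n, y - q⟫ = 0 := (Submodule.mem_orthogonal V _).1 hmem (z n) (hzV n)
      have : ⟪z n, y⟫ - ⟪z n, q⟫ = 0 := by rw [← inner_sub_right]; exact h0
      linarith
    simp only [hinner_eq]
    rw [Metric.cauchySeq_iff]
    intro ε hε
    have hqV : q ∈ closure (Set.range e) := hVc (SetLike.coe_mem _)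
    obtain ⟨d, hd_mem, hd_close⟩ :=
      Metric.mem_closure_iff.1 hqV (ε / (4 * M')) (by positivity)
    obtain ⟨j, rfl⟩ := hd_mem
    obtain ⟨N, hN⟩ := Metric.cauchySeq_iff.1 (hconvj j).cauchySeq (ε / 2) (by positivity)
    refine ⟨N, fun m hm n hn => ?_⟩
    have key : ∀ k, |⟪z (φ k), q⟫ - ⟪z (φ k), e j⟫| ≤ ε / 4 := by
      intro k
      have h2 : |⟪z (φ k), q - e j⟫| ≤ ‖z (φ k)‖ * ‖q - e j‖ := abs_real_inner_le_norm _ _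
      have h3 : ‖q - e j‖ ≤ ε / (4 * M') := by
        have := hd_close
        rw [dist_eq_norm] at this
        linarith
      have h4 : ‖z (φ k)‖ * ‖q - e j‖ ≤ M' * (ε / (4 * M')) :=
        mul_le_mul (hM' _) h3 (norm_nonneg _) hM'pos.le
      have h5 : M' * (ε / (4 * M')) = ε / 4 := by field_simp
      have h6 : ⟪z (φ k), q - e j⟫ = ⟪z (φ k), q⟫ - ⟪z (φ k), e j⟫ := inner_sub_right _ _ _
      rw [h6] at h2
      linarith
    have hmn := hN m hm n hn
    rw [Real.dist_eq] at hmn ⊢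
    have km := key m
    have kn := key n
    have : ⟪z (φ m), q⟫ - ⟪z (φ n), q⟫
        = (⟪z (φ m), q⟫ - ⟪z (φ m), e j⟫) + (⟪z (φ m), e j⟫ - ⟪z (φ n), e j⟫)
          + (⟪z (φ n), e j⟫ - ⟪z (φ n), q⟫) := by ring
    rw [this]
    calc |_| ≤ |⟪z (φ m), q⟫ - ⟪z (φ m), e j⟫| + |⟪z (φ m), e j⟫ - ⟪z (φ n), e j⟫|
        + |⟪z (φ n), e j⟫ - ⟪z (φ n), q⟫| := by
          exact (abs_add_le _ _).trans (by gcongr; exact abs_add_le _ _)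
      _ < ε := by
          rw [abs_sub_comm (⟪z (φ n), e j⟫)] at *
          linarith [km, kn, hmn]
  -- build the weak limit via Riesz representation
  have hlim : ∀ y : K, ∃ l : ℝ, Tendsto (fun k => ⟪z (φ k), y⟫) atTop (𝓝 l) := fun y =>
    cauchySeq_tendsto_of_complete (hCauchy y)
  choose l hl using hlim
  have hadd : ∀ y y', l (y + y') = l y + l y' := by
    intro y y'
    refine tendsto_nhds_unique (hl (y + y')) ?_
    have := (hl y).add (hl y')
    simpa [inner_add_right] using this
  have hsmul : ∀ (r : ℝ) (y : K), l (r • y) = r * l y := by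
    intro r y
    refine tendsto_nhds_unique (hl (r • y)) ?_
    have := (hl y).const_mul r
    simpa [real_inner_smul_right] using this
  have hbound : ∀ y : K, ‖l y‖ ≤ M' * ‖y‖ := by
    intro y
    rw [Real.norm_eq_abs]
    have h1 : Tendsto (fun k => |⟪z (φ k), y⟫|) atTop (𝓝 |l y|) := (hl y).abs
    refine le_of_tendsto h1 (Eventually.of_forall fun k => ?_)
    calc |⟪z (φ k), y⟫| ≤ ‖z (φ k)‖ * ‖y‖ := abs_real_inner_le_norm _ _
      _ ≤ M' * ‖y‖ := mul_le_mul_of_nonneg_right (hM' _) (norm_nonneg _)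
  set Llin : K →ₗ[ℝ] ℝ :=
    { toFun := l, map_add' := hadd, map_smul' := hsmul } with hLlin
  set L : K →L[ℝ] ℝ := Llin.mkContinuous M' hbound with hL
  refine ⟨(InnerProductSpace.toDual ℝ K).symm L, φ, hφ, fun y => ?_⟩
  have hw : ⟪(InnerProductSpace.toDual ℝ K).symm L, y⟫ = L y :=
    InnerProductSpace.toDual_symm_apply
  rw [hw]
  exact hl y

set_option maxHeartbeats 1000000 in
theorem km_main {K : Type*} [NormedAddCommGroup K] [InnerProductSpace ℝ K] [CompleteSpace K]
    (R : K → K) (hR : ∀ a b, ‖R a - R b‖ ≤ ‖a - b‖)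
    (f₀ : K) (hf₀ : R f₀ = f₀)
    (μ : ℕ → ℝ) (hμ : ∀ n, μ n ∈ Set.Ioo (0 : ℝ) 1)
    (hdiv : ¬ Summable (fun n => μ n * (1 - μ n)))
    (c : ℕ → K) (hc : Summable (fun n => ‖c n‖))
    (z : ℕ → K) (hz : ∀ n, z (n + 1) = z n + μ n • (R (z n) - z n) + c n) :
    ∃ w : K, R w = w ∧ (∀ y, Tendsto (fun n => ⟪z n, y⟫) atTop (𝓝 ⟪w, y⟫)) ∧
      Tendsto (fun n => R (z n) - z n) atTop (𝓝 0) := by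
  have hμ0 : ∀ n, 0 < μ n := fun n => (hμ n).1
  have hμ1 : ∀ n, μ n < 1 := fun n => (hμ n).2
  -- basic recursion estimate for any fixed point
  have hid : ∀ (f : K) (n : ℕ),
      z (n + 1) - f = (1 - μ n) • (z n - f) + μ n • (R (z n) - f) + c n := by
    intro f n
    rw [hz n]
    module
  have hrec : ∀ (f : K), R f = f → ∀ n, ‖z (n + 1) - f‖ ≤ ‖z n - f‖ + ‖c n‖ := by
    intro f hf n
    rw [hid f n]
    calc ‖(1 - μ n) • (z n - f) + μ n • (R (z n) - f) + c n‖
        ≤ ‖(1 - μ n) • (z n - f)‖ + ‖μ n • (R (z n) - f)‖ + ‖c n‖ := norm_add₃_le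
      _ = (1 - μ n) * ‖z n - f‖ + μ n * ‖R (z n) - f‖ + ‖c n‖ := by
          rw [norm_smul, norm_smul, Real.norm_eq_abs, Real.norm_eq_abs,
            abs_of_pos (hμ0 n), abs_of_pos (by linarith [hμ1 n] : (0:ℝ) < 1 - μ n)]
      _ ≤ ‖z n - f‖ + ‖c n‖ := by
          have h1 : ‖R (z n) - f‖ ≤ ‖z n - f‖ := by
            have := hR (z n) f; rwa [hf] at this
          nlinarith [hμ0 n, hμ1 n, norm_nonneg (z n - f)]
  have hconv_fix : ∀ (f : K), R f = f → ∃ ρ, Tendsto (fun n => ‖z n - f‖) atTop (𝓝 ρ) := by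
    intro f hf
    exact km_conv_of_perturb _ _ (fun n => norm_nonneg _) (fun n => norm_nonneg _) hc (hrec f hf)
  -- uniform bound
  set C0 : ℝ := ∑' n, ‖c n‖ with hC0def
  have hC0 : 0 ≤ C0 := tsum_nonneg fun n => norm_nonneg _
  have hcC0 : ∀ n, ‖c n‖ ≤ C0 := fun n => Summable.le_tsum hc n fun _ _ => norm_nonneg _
  set B : ℝ := ‖z 0 - f₀‖ + C0 with hBdef
  have hB : ∀ n, ‖z n - f₀‖ ≤ B := by
    have step : ∀ n, ‖z n - f₀‖ ≤ ‖z 0 - f₀‖ + ∑ k ∈ Finset.range n, ‖c k‖ := by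
      intro n
      induction n with
      | zero => simp
      | succ m ih =>
        rw [Finset.sum_range_succ]
        have := hrec f₀ hf₀ m
        linarith
    intro n
    have h2 : ∑ k ∈ Finset.range n, ‖c k‖ ≤ C0 := Summable.sum_le_tsum _ (fun _ _ => norm_nonneg _) hc
    have := step n
    rw [hBdef]
    linarith
  have hBnn : 0 ≤ B := (norm_nonneg _).trans (hB 0)
  have hM : ∀ n, ‖z n‖ ≤ B + ‖f₀‖ := by
    intro n
    calc ‖z n‖ = ‖z n - f₀ + f₀‖ := by congr 1; abel
      _ ≤ ‖z n - f₀‖ + ‖f₀‖ := norm_add_le _ _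
      _ ≤ B + ‖f₀‖ := by linarith [hB n]
  -- the residual
  set d : ℕ → ℝ := fun n => ‖R (z n) - z n‖ with hddef
  have hd_nn : ∀ n, 0 ≤ d n := fun n => norm_nonneg _
  have hd_rec : ∀ n, d (n + 1) ≤ d n + 2 * ‖c n‖ := by
    intro n
    have h1 : z (n + 1) - z n = μ n • (R (z n) - z n) + c n := by rw [hz n]; abel
    have h2 : R (z n) - z (n + 1) = (1 - μ n) • (R (z n) - z n) - c n := by rw [hz n]; module
    have h3 : ‖R (z (n + 1)) - R (z n)‖ ≤ μ n * d n + ‖c n‖ := by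
      calc ‖R (z (n + 1)) - R (z n)‖ ≤ ‖z (n + 1) - z n‖ := hR _ _
        _ ≤ μ n * d n + ‖c n‖ := by
            rw [h1]
            refine (norm_add_le _ _).trans ?_
            rw [norm_smul, Real.norm_eq_abs, abs_of_pos (hμ0 n)]
    have h4 : ‖R (z n) - z (n + 1)‖ ≤ (1 - μ n) * d n + ‖c n‖ := by
      rw [h2]
      refine (norm_sub_le _ _).trans ?_
      rw [norm_smul, Real.norm_eq_abs, abs_of_pos (by linarith [hμ1 n] : (0:ℝ) < 1 - μ n)]
    have h5 : R (z (n + 1)) - z (n + 1) = (R (z (n + 1)) - R (z n)) + (R (z n) - z (n + 1)) := by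
      abel
    calc d (n + 1) = ‖R (z (n + 1)) - z (n + 1)‖ := rfl
      _ ≤ ‖R (z (n + 1)) - R (z n)‖ + ‖R (z n) - z (n + 1)‖ := by rw [h5]; exact norm_add_le _ _
      _ ≤ d n + 2 * ‖c n‖ := by linarith
  obtain ⟨L, hL⟩ := km_conv_of_perturb d (fun n => 2 * ‖c n‖) hd_nn
    (fun n => by positivity) (hc.mul_left 2) hd_rec
  -- the Fejér-type quadratic estimate
  have hkey : ∀ n, ‖z (n + 1) - f₀‖ ^ 2
      ≤ ‖z n - f₀‖ ^ 2 - μ n * (1 - μ n) * d n ^ 2 + ‖c n‖ * (2 * B + ‖c n‖) := by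
    intro n
    set u : K := (1 - μ n) • (z n - f₀) + μ n • (R (z n) - f₀) with hu
    have hu_id : z (n + 1) - f₀ = u + c n := hid f₀ n
    have hcombo := km_combo_sq (μ n) (z n - f₀) (R (z n) - f₀)
    have hdiff : (z n - f₀) - (R (z n) - f₀) = -(R (z n) - z n) := by abel
    have hdn : ‖(z n - f₀) - (R (z n) - f₀)‖ = d n := by rw [hdiff, norm_neg]
    have hRle : ‖R (z n) - f₀‖ ≤ ‖z n - f₀‖ := by
      have := hR (z n) f₀; rwa [hf₀] at this
    have hu_sq : ‖u‖ ^ 2 ≤ ‖z n - f₀‖ ^ 2 - μ n * (1 - μ n) * d n ^ 2 := by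
      rw [hu, hcombo, hdn]
      have hsq : ‖R (z n) - f₀‖ ^ 2 ≤ ‖z n - f₀‖ ^ 2 := by
        nlinarith [norm_nonneg (R (z n) - f₀), norm_nonneg (z n - f₀), hRle]
      nlinarith [mul_le_mul_of_nonneg_left hsq (hμ0 n).le]
    have hu_le : ‖u‖ ≤ B := by
      rw [hu]
      calc ‖(1 - μ n) • (z n - f₀) + μ n • (R (z n) - f₀)‖
          ≤ ‖(1 - μ n) • (z n - f₀)‖ + ‖μ n • (R (z n) - f₀)‖ := norm_add_le _ _
        _ = (1 - μ n) * ‖z n - f₀‖ + μ n * ‖R (z n) - f₀‖ := by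
            rw [norm_smul, norm_smul, Real.norm_eq_abs, Real.norm_eq_abs,
              abs_of_pos (hμ0 n), abs_of_pos (by linarith [hμ1 n] : (0:ℝ) < 1 - μ n)]
        _ ≤ B := by nlinarith [hμ0 n, hμ1 n, hB n, norm_nonneg (z n - f₀)]
    have htri : ‖z (n + 1) - f₀‖ ≤ ‖u‖ + ‖c n‖ := by rw [hu_id]; exact norm_add_le _ _
    nlinarith [norm_nonneg (z (n + 1) - f₀), norm_nonneg u, norm_nonneg (c n), hu_le, htri,
      hu_sq]
  -- summability of the weighted residuals
  have herr_sum : Summable (fun n => ‖c n‖ * (2 * B + ‖c n‖)) := by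
    refine Summable.of_nonneg_of_le (fun n => by positivity) (fun n => ?_) (hc.mul_right (2 * B + C0))
    have := hcC0 n
    nlinarith [norm_nonneg (c n)]
  have hsum_d : Summable (fun n => μ n * (1 - μ n) * d n ^ 2) := by
    apply summable_of_sum_range_le (c := ‖z 0 - f₀‖ ^ 2 + ∑' n, ‖c n‖ * (2 * B + ‖c n‖))
    · intro n
      exact mul_nonneg (mul_nonneg (hμ0 n).le (by linarith [hμ1 n])) (sq_nonneg _)
    · intro n
      have tele : ∀ m, ∑ k ∈ Finset.range m, μ k * (1 - μ k) * d k ^ 2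
          ≤ ‖z 0 - f₀‖ ^ 2 - ‖z m - f₀‖ ^ 2
            + ∑ k ∈ Finset.range m, ‖c k‖ * (2 * B + ‖c k‖) := by
        intro m
        induction m with
        | zero => simp
        | succ j ih =>
          rw [Finset.sum_range_succ, Finset.sum_range_succ]
          have := hkey j
          linarith
      have h2 : ∑ k ∈ Finset.range n, ‖c k‖ * (2 * B + ‖c k‖)
          ≤ ∑' k, ‖c k‖ * (2 * B + ‖c k‖) :=
        Summable.sum_le_tsum _ (fun k _ => by positivity) herr_sum
      have := tele n
      nlinarith [sq_nonneg ‖z n - f₀‖]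
  -- the residual tends to zero
  have hL0 : L = 0 := by
    by_contra hL0
    have hLpos : 0 < L := by
      rcases lt_or_gt_of_ne hL0 with h | h
      · exact absurd (ge_of_tendsto' hL hd_nn) (by push_neg; linarith)
      · exact h
    have hev : ∀ᶠ n in atTop, L / 2 < d n := hL.eventually (eventually_gt_nhds (by linarith))
    obtain ⟨N, hN⟩ := eventually_atTop.1 hev
    apply hdiv
    rw [← summable_nat_add_iff N]
    have hshift : Summable (fun n => μ (n + N) * (1 - μ (n + N)) * d (n + N) ^ 2) :=
      (summable_nat_add_iff N).2 hsum_d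
    refine Summable.of_nonneg_of_le (fun n => ?_) (fun n => ?_)
      (hshift.mul_left (4 / L ^ 2))
    · exact mul_nonneg (hμ0 _).le (by linarith [hμ1 (n + N)])
    · have hd2 : L / 2 ≤ d (n + N) := (hN (n + N) (Nat.le_add_left N n)).le
      have h1 : L ^ 2 / 4 ≤ d (n + N) ^ 2 := by nlinarith
      have hnn : 0 ≤ μ (n + N) * (1 - μ (n + N)) :=
        mul_nonneg (hμ0 _).le (by linarith [hμ1 (n + N)])
      have h2 : μ (n + N) * (1 - μ (n + N)) * (L ^ 2 / 4)
          ≤ μ (n + N) * (1 - μ (n + N)) * d (n + N) ^ 2 :=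
        mul_le_mul_of_nonneg_left h1 hnn
      have hL2 : (0 : ℝ) < L ^ 2 := by positivity
      calc μ (n + N) * (1 - μ (n + N))
          = 4 / L ^ 2 * (μ (n + N) * (1 - μ (n + N)) * (L ^ 2 / 4)) := by
            field_simp
        _ ≤ 4 / L ^ 2 * (μ (n + N) * (1 - μ (n + N)) * d (n + N) ^ 2) :=
            mul_le_mul_of_nonneg_left h2 (by positivity)
  have hd0 : Tendsto d atTop (𝓝 0) := hL0 ▸ hL
  have hres : Tendsto (fun n => R (z n) - z n) atTop (𝓝 0) :=
    tendsto_zero_iff_norm_tendsto_zero.2 hd0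
  -- extract a weak cluster point
  obtain ⟨w, φ, hφ, hwconv⟩ := km_weak_compact z (B + ‖f₀‖) hM
  -- demiclosedness
  have hdemi : ∀ (w' : K) (ψ : ℕ → ℕ), StrictMono ψ →
      (∀ y, Tendsto (fun k => ⟪z (ψ k), y⟫) atTop (𝓝 ⟪w', y⟫)) → R w' = w' := by
    intro w' ψ hψ hwc
    have hdz : Tendsto (fun k => d (ψ k)) atTop (𝓝 0) := hd0.comp hψ.tendsto_atTop
    have hkey2 : ∀ k, ‖w' - R w'‖ ^ 2
        ≤ d (ψ k) ^ 2 + 2 * d (ψ k) * (B + ‖f₀‖ + ‖w'‖)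
          - 2 * (⟪z (ψ k), w' - R w'⟫ - ⟪w', w' - R w'⟫) := by
      intro k
      set v : K := z (ψ k) with hv
      have e1 : v - R w' = (v - w') + (w' - R w') := by abel
      have e2 : ‖v - R w'‖ ^ 2
          = ‖v - w'‖ ^ 2 + 2 * ⟪v - w', w' - R w'⟫ + ‖w' - R w'‖ ^ 2 := by
        rw [e1, ← real_inner_self_eq_norm_sq, ← real_inner_self_eq_norm_sq,
          ← real_inner_self_eq_norm_sq]
        simp only [inner_add_left, inner_add_right]
        rw [real_inner_comm (w' - R w') (v - w')]
        ring
      have e3 : ‖v - R w'‖ ≤ d (ψ k) + ‖v - w'‖ := by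
        calc ‖v - R w'‖ = ‖(v - R v) + (R v - R w')‖ := by rw [show v - R w' = (v - R v) + (R v - R w') from by abel]
          _ ≤ ‖v - R v‖ + ‖R v - R w'‖ := norm_add_le _ _
          _ ≤ d (ψ k) + ‖v - w'‖ := by
              have h1 : ‖v - R v‖ = d (ψ k) := by rw [norm_sub_rev]
              have h2 := hR v w'
              linarith
      have e4 : ‖v - w'‖ ≤ B + ‖f₀‖ + ‖w'‖ := by
        calc ‖v - w'‖ ≤ ‖v‖ + ‖w'‖ := norm_sub_le _ _
          _ ≤ B + ‖f₀‖ + ‖w'‖ := by linarith [hM (ψ k)]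
      have e5 : ⟪v - w', w' - R w'⟫ = ⟪v, w' - R w'⟫ - ⟪w', w' - R w'⟫ := inner_sub_left _ _ _
      nlinarith [norm_nonneg (v - R w'), norm_nonneg (v - w'), hd_nn (ψ k), e3, e2, e4, e5]
    have hrhs : Tendsto (fun k => d (ψ k) ^ 2 + 2 * d (ψ k) * (B + ‖f₀‖ + ‖w'‖)
        - 2 * (⟪z (ψ k), w' - R w'⟫ - ⟪w', w' - R w'⟫)) atTop (𝓝 0) := by
      have t1 : Tendsto (fun k => d (ψ k) ^ 2) atTop (𝓝 0) := by
        simpa using hdz.pow 2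
      have t2 : Tendsto (fun k => 2 * d (ψ k) * (B + ‖f₀‖ + ‖w'‖)) atTop (𝓝 0) := by
        have := (hdz.const_mul 2).mul_const (B + ‖f₀‖ + ‖w'‖)
        simpa [mul_assoc] using this
      have t3 : Tendsto (fun k => 2 * (⟪z (ψ k), w' - R w'⟫ - ⟪w', w' - R w'⟫)) atTop (𝓝 0) := by
        have := ((hwc (w' - R w')).sub_const ⟪w', w' - R w'⟫).const_mul 2
        simpa using this
      have := (t1.add t2).sub t3
      simpa using this
    have hle : ‖w' - R w'‖ ^ 2 ≤ 0 := ge_of_tendsto hrhs (Eventually.of_forall hkey2)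
    have : ‖w' - R w'‖ = 0 := by nlinarith [norm_nonneg (w' - R w'), sq_nonneg ‖w' - R w'‖]
    have := norm_sub_eq_zero_iff.1 this
    exact this.symm
  have hRw : R w = w := hdemi w φ hφ hwconv
  refine ⟨w, hRw, fun y => ?_, hres⟩
  -- full weak convergence by uniqueness of weak cluster points
  by_contra hcon
  rw [Metric.tendsto_atTop] at hcon
  push_neg at hcon
  obtain ⟨ε, hε, hfreq⟩ := hcon
  obtain ⟨ψ, hψ, hψ_prop⟩ := extraction_of_frequently_atTop (frequently_atTop.2 hfreq)
  obtain ⟨w', χ, hχ, hw'conv⟩ := km_weak_compact (z ∘ ψ) (B + ‖f₀‖) (fun n => hM _)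
  have hRw' : R w' = w' := by
    refine hdemi w' (ψ ∘ χ) (hψ.comp hχ) (fun y' => ?_)
    simpa [Function.comp] using hw'conv y'
  -- inner products against w - w' converge
  obtain ⟨ρ, hρ⟩ := hconv_fix w hRw
  obtain ⟨ρ', hρ'⟩ := hconv_fix w' hRw'
  have htt : Tendsto (fun n => ⟪z n, w - w'⟫) atTop
      (𝓝 ((ρ' ^ 2 - ρ ^ 2 + ‖w‖ ^ 2 - ‖w'‖ ^ 2) / 2)) := by
    have h1 : ∀ n, ⟪z n, w - w'⟫
        = (‖z n - w'‖ ^ 2 - ‖z n - w‖ ^ 2 + ‖w‖ ^ 2 - ‖w'‖ ^ 2) / 2 := by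
      intro n
      have e1 : ‖z n - w‖ ^ 2 = ‖z n‖ ^ 2 - 2 * ⟪z n, w⟫ + ‖w‖ ^ 2 := by
        rw [← real_inner_self_eq_norm_sq, ← real_inner_self_eq_norm_sq,
          ← real_inner_self_eq_norm_sq]
        simp only [inner_sub_left, inner_sub_right]
        rw [real_inner_comm w (z n)]
        ring
      have e2 : ‖z n - w'‖ ^ 2 = ‖z n‖ ^ 2 - 2 * ⟪z n, w'⟫ + ‖w'‖ ^ 2 := by
        rw [← real_inner_self_eq_norm_sq, ← real_inner_self_eq_norm_sq,
          ← real_inner_self_eq_norm_sq]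
        simp only [inner_sub_left, inner_sub_right]
        rw [real_inner_comm w' (z n)]
        ring
      have e3 : ⟪z n, w - w'⟫ = ⟪z n, w⟫ - ⟪z n, w'⟫ := inner_sub_right _ _ _
      rw [e3]
      linarith
    simp_rw [h1]
    have := (((hρ'.pow 2).sub (hρ.pow 2)).add_const (‖w‖ ^ 2)).sub_const (‖w'‖ ^ 2)
    exact this.div_const 2
  have hc1 : ⟪w, w - w'⟫ = (ρ' ^ 2 - ρ ^ 2 + ‖w‖ ^ 2 - ‖w'‖ ^ 2) / 2 :=
    tendsto_nhds_unique (hwconv (w - w')) (htt.comp hφ.tendsto_atTop)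
  have hc2 : ⟪w', w - w'⟫ = (ρ' ^ 2 - ρ ^ 2 + ‖w‖ ^ 2 - ‖w'‖ ^ 2) / 2 := by
    refine tendsto_nhds_unique ?_ (htt.comp ((hψ.comp hχ).tendsto_atTop))
    exact hw'conv (w - w')
  have hww' : w = w' := by
    have h0 : ⟪w - w', w - w'⟫ = 0 := by
      rw [inner_sub_left]
      linarith
    have := inner_self_eq_zero.1 h0
    exact sub_eq_zero.1 this
  -- contradiction with the ε-separation along ψ ∘ χ
  have hlast : Tendsto (fun k => ⟪z (ψ (χ k)), y⟫) atTop (𝓝 ⟪w, y⟫) := by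
    rw [hww']
    simpa [Function.comp] using hw'conv y
  obtain ⟨N, hN⟩ := Metric.tendsto_atTop.1 hlast ε hε
  exact absurd (hψ_prop (χ N)) (not_le.2 (hN N le_rfl))

/-- Pairs with the `L²` product structure. -/
noncomputable def km_mk2 {H : Type*} [NormedAddCommGroup H] [InnerProductSpace ℝ H]
    (a b : H) : WithLp 2 (H × H) := (WithLp.equiv 2 (H × H)).symm (a, b)

lemma km_mk2_norm_sq {H : Type*} [NormedAddCommGroup H] [InnerProductSpace ℝ H]
    (q : WithLp 2 (H × H)) : ‖q‖ ^ 2 = ‖q.fst‖ ^ 2 + ‖q.snd‖ ^ 2 :=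
  WithLp.prod_norm_sq_eq_of_L2 q

lemma km_fst_le {H : Type*} [NormedAddCommGroup H] [InnerProductSpace ℝ H]
    (q : WithLp 2 (H × H)) : ‖q.fst‖ ≤ ‖q‖ := by
  have h := km_mk2_norm_sq q
  have h1 : ‖q.fst‖ ^ 2 ≤ ‖q‖ ^ 2 := by nlinarith [sq_nonneg ‖q.snd‖]
  calc ‖q.fst‖ = Real.sqrt (‖q.fst‖ ^ 2) := (Real.sqrt_sq (norm_nonneg _)).symm
    _ ≤ Real.sqrt (‖q‖ ^ 2) := Real.sqrt_le_sqrt h1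
    _ = ‖q‖ := Real.sqrt_sq (norm_nonneg _)

lemma km_snd_le {H : Type*} [NormedAddCommGroup H] [InnerProductSpace ℝ H]
    (q : WithLp 2 (H × H)) : ‖q.snd‖ ≤ ‖q‖ := by
  have h := km_mk2_norm_sq q
  have h1 : ‖q.snd‖ ^ 2 ≤ ‖q‖ ^ 2 := by nlinarith [sq_nonneg ‖q.fst‖]
  calc ‖q.snd‖ = Real.sqrt (‖q.snd‖ ^ 2) := (Real.sqrt_sq (norm_nonneg _)).symm
    _ ≤ Real.sqrt (‖q‖ ^ 2) := Real.sqrt_le_sqrt h1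
    _ = ‖q‖ := Real.sqrt_sq (norm_nonneg _)

lemma km_norm_le_add {H : Type*} [NormedAddCommGroup H] [InnerProductSpace ℝ H]
    (a b : H) : ‖km_mk2 a b‖ ≤ ‖a‖ + ‖b‖ := by
  have h := km_mk2_norm_sq (km_mk2 a b)
  have hf : (km_mk2 a b).fst = a := rfl
  have hs : (km_mk2 a b).snd = b := rfl
  rw [hf, hs] at h
  have h1 : ‖km_mk2 a b‖ ^ 2 ≤ (‖a‖ + ‖b‖) ^ 2 := by
    nlinarith [norm_nonneg a, norm_nonneg b]
  calc ‖km_mk2 a b‖ = Real.sqrt (‖km_mk2 a b‖ ^ 2) := (Real.sqrt_sq (norm_nonneg _)).symm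
    _ ≤ Real.sqrt ((‖a‖ + ‖b‖) ^ 2) := Real.sqrt_le_sqrt h1
    _ = ‖a‖ + ‖b‖ := Real.sqrt_sq (by positivity)

/-- The reflected resolvent is nonexpansive. -/
lemma km_refl_nonexp {H : Type*} [NormedAddCommGroup H] [InnerProductSpace ℝ H]
    (A : H → Set H) (hA : IsMonotoneOp A) (γ : ℝ) (hγ : 0 < γ) (J : H → H)
    (hJ : ∀ x p : H, J x = p ↔ ∃ u ∈ A p, x - p = (2 * γ) • u)
    (a b : H) : ‖((2 : ℝ) • J a - a) - ((2 : ℝ) • J b - b)‖ ≤ ‖a - b‖ := by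
  obtain ⟨u, hu, hau⟩ := (hJ a (J a)).1 rfl
  obtain ⟨v, hv, hbv⟩ := (hJ b (J b)).1 rfl
  set s : H := J a - J b with hs
  set t : H := (a - J a) - (b - J b) with ht
  have hst : 0 ≤ ⟪s, t⟫ := by
    have h1 : t = (2 * γ) • (u - v) := by rw [ht, hau, hbv, smul_sub]
    have h2 : ⟪s, t⟫ = (2 * γ) * ⟪s, u - v⟫ := by rw [h1, real_inner_smul_right]
    have h3 : 0 ≤ ⟪s, u - v⟫ := hA (J a) (J b) u v hu hv
    rw [h2]
    positivity
  have h4 := km_sub_le_add s t hst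
  have h5 : s - t = ((2 : ℝ) • J a - a) - ((2 : ℝ) • J b - b) := by
    rw [hs, ht]; module
  have h6 : s + t = a - b := by rw [hs, ht]; abel
  rw [h5, h6] at h4
  exact h4


set_option maxHeartbeats 1000000 in
theorem statement17
    (A₁ A₂ : H → Set H) (hA₁ : IsMaxMonotoneOp A₁) (hA₂ : IsMaxMonotoneOp A₂)
    (hne : ∃ x : H, ∃ u ∈ A₁ x, ∃ v ∈ A₂ x, u + v = 0)
    (γ : ℝ) (hγ : 0 < γ)
    (lam : ℕ → ℝ) (hlam : ∀ n, lam n ∈ Set.Ioo (0 : ℝ) (3 / 2))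
    (b₁ b₂ : ℕ → H)
    (hdiv : ¬ Summable (fun n => lam n * (3 - 2 * lam n)))
    (herr₁ : Summable (fun n => lam n * ‖b₁ n‖))
    (herr₂ : Summable (fun n => lam n * ‖b₂ n‖))
    (J₁ J₂ : H → H)
    (hJ₁ : ∀ x p : H, J₁ x = p ↔ ∃ u ∈ A₁ p, x - p = (2 * γ) • u)
    (hJ₂ : ∀ x p : H, J₂ x = p ↔ ∃ u ∈ A₂ p, x - p = (2 * γ) • u)
    (z₁ z₂ x p₁ p₂ : ℕ → H)
    (hx : ∀ n, x n = (2 : ℝ)⁻¹ • (z₁ n + z₂ n))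
    (hp₁ : ∀ n, p₁ n = J₁ (z₂ n) + b₁ n)
    (hp₂ : ∀ n, p₂ n = J₂ (z₁ n) + b₂ n)
    (hz₁ : ∀ n, z₁ (n + 1) = z₁ n + lam n • (p₁ n - x n))
    (hz₂ : ∀ n, z₂ (n + 1) = z₂ n + lam n • (p₂ n - x n)) :
    ∃ xbar : H, (∃ u ∈ A₁ xbar, ∃ v ∈ A₂ xbar, u + v = 0) ∧
      WeakLim x xbar ∧ Tendsto (fun n => x (n + 1) - x n) atTop (nhds 0) := by
  have hlam0 : ∀ n, 0 < lam n := fun n => (hlam n).1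
  have hlam32 : ∀ n, lam n < 3 / 2 := fun n => (hlam n).2
  -- the product space setup
  set Z : ℕ → WithLp 2 (H × H) := fun n => km_mk2 (z₁ n) (z₂ n) with hZ
  set RR : WithLp 2 (H × H) → WithLp 2 (H × H) :=
    fun q => km_mk2 ((2 : ℝ) • J₁ q.snd - q.snd) ((2 : ℝ) • J₂ q.fst - q.fst) with hRR
  have hRRne : ∀ a b, ‖RR a - RR b‖ ≤ ‖a - b‖ := by
    intro a b
    have h1 : ‖RR a - RR b‖ ^ 2 ≤ ‖a - b‖ ^ 2 := by
      have e1 := km_mk2_norm_sq (RR a - RR b)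
      have e2 := km_mk2_norm_sq (a - b)
      have c1 : (RR a - RR b).fst = ((2 : ℝ) • J₁ a.snd - a.snd) - ((2 : ℝ) • J₁ b.snd - b.snd) := rfl
      have c2 : (RR a - RR b).snd = ((2 : ℝ) • J₂ a.fst - a.fst) - ((2 : ℝ) • J₂ b.fst - b.fst) := rfl
      have c3 : (a - b).fst = a.fst - b.fst := rfl
      have c4 : (a - b).snd = a.snd - b.snd := rfl
      rw [c1, c2] at e1
      rw [c3, c4] at e2
      have n1 := km_refl_nonexp A₁ hA₁.1 γ hγ J₁ hJ₁ a.snd b.snd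
      have n2 := km_refl_nonexp A₂ hA₂.1 γ hγ J₂ hJ₂ a.fst b.fst
      rw [e1, e2]
      nlinarith [norm_nonneg (((2 : ℝ) • J₁ a.snd - a.snd) - ((2 : ℝ) • J₁ b.snd - b.snd)),
        norm_nonneg (((2 : ℝ) • J₂ a.fst - a.fst) - ((2 : ℝ) • J₂ b.fst - b.fst)),
        norm_nonneg (a.snd - b.snd), norm_nonneg (a.fst - b.fst)]
    calc ‖RR a - RR b‖ = Real.sqrt (‖RR a - RR b‖ ^ 2) := (Real.sqrt_sq (norm_nonneg _)).symm
      _ ≤ Real.sqrt (‖a - b‖ ^ 2) := Real.sqrt_le_sqrt h1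
      _ = ‖a - b‖ := Real.sqrt_sq (norm_nonneg _)
  -- a fixed point from the nonempty zero set
  obtain ⟨xs, u0, hu0, v0, hv0, huv0⟩ := hne
  have hv0u0 : v0 = -u0 := eq_neg_of_add_eq_zero_right huv0
  set f₀ : WithLp 2 (H × H) := km_mk2 (xs + (2 * γ) • v0) (xs + (2 * γ) • u0) with hf₀def
  have hf₀ : RR f₀ = f₀ := by
    have hJ1 : J₁ (xs + (2 * γ) • u0) = xs :=
      (hJ₁ _ xs).2 ⟨u0, hu0, by abel⟩
    have hJ2 : J₂ (xs + (2 * γ) • v0) = xs :=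
      (hJ₂ _ xs).2 ⟨v0, hv0, by abel⟩
    have e1 : (f₀ : WithLp 2 (H × H)).fst = xs + (2 * γ) • v0 := rfl
    have e2 : (f₀ : WithLp 2 (H × H)).snd = xs + (2 * γ) • u0 := rfl
    show km_mk2 ((2 : ℝ) • J₁ f₀.snd - f₀.snd) ((2 : ℝ) • J₂ f₀.fst - f₀.fst) = f₀
    rw [hf₀def]
    have g1 : (2 : ℝ) • J₁ (xs + (2 * γ) • u0) - (xs + (2 * γ) • u0) = xs + (2 * γ) • v0 := by
      rw [hJ1, hv0u0, smul_neg]; module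
    have g2 : (2 : ℝ) • J₂ (xs + (2 * γ) • v0) - (xs + (2 * γ) • v0) = xs + (2 * γ) • u0 := by
      rw [hJ2, hv0u0, smul_neg]; module
    show km_mk2 ((2 : ℝ) • J₁ (xs + (2 * γ) • u0) - (xs + (2 * γ) • u0))
        ((2 : ℝ) • J₂ (xs + (2 * γ) • v0) - (xs + (2 * γ) • v0)) = _
    rw [g1, g2]
  -- parameters
  set μ : ℕ → ℝ := fun n => lam n / 2 with hμdef
  have hμmem : ∀ n, μ n ∈ Set.Ioo (0 : ℝ) 1 := fun n =>
    ⟨by have := hlam0 n; positivity, by have := hlam32 n; rw [hμdef]; simp; linarith⟩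
  have hdiv' : ¬ Summable (fun n => μ n * (1 - μ n)) := by
    intro hS
    apply hdiv
    refine Summable.of_nonneg_of_le (fun n => ?_) (fun n => ?_) (hS.mul_left 6)
    · have h1 := hlam0 n; have h2 := hlam32 n; nlinarith
    · have h1 := hlam0 n; have h2 := hlam32 n
      rw [hμdef]
      ring_nf
      nlinarith
  set c : ℕ → WithLp 2 (H × H) := fun n => lam n • km_mk2 (b₁ n) (b₂ n) with hcdef
  have hcsum : Summable (fun n => ‖c n‖) := by
    refine Summable.of_nonneg_of_le (fun n => norm_nonneg _) (fun n => ?_) (herr₁.add herr₂)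
    rw [hcdef]
    calc ‖lam n • km_mk2 (b₁ n) (b₂ n)‖ = |lam n| * ‖km_mk2 (b₁ n) (b₂ n)‖ := norm_smul _ _
      _ ≤ lam n * (‖b₁ n‖ + ‖b₂ n‖) := by
          rw [abs_of_pos (hlam0 n)]
          exact mul_le_mul_of_nonneg_left (km_norm_le_add _ _) (hlam0 n).le
      _ = lam n * ‖b₁ n‖ + lam n * ‖b₂ n‖ := by ring
  -- the recurrence in product form
  have hZrec : ∀ n, Z (n + 1) = Z n + μ n • (RR (Z n) - Z n) + c n := by
    intro n
    have comp1 : z₁ (n + 1)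
        = z₁ n + μ n • (((2 : ℝ) • J₁ (z₂ n) - z₂ n) - z₁ n) + lam n • b₁ n := by
      rw [hμdef, hz₁ n, hp₁ n, hx n]
      module
    have comp2 : z₂ (n + 1)
        = z₂ n + μ n • (((2 : ℝ) • J₂ (z₁ n) - z₁ n) - z₂ n) + lam n • b₂ n := by
      rw [hμdef, hz₂ n, hp₂ n, hx n]
      module
    show km_mk2 (z₁ (n + 1)) (z₂ (n + 1))
        = km_mk2 (z₁ n + μ n • (((2 : ℝ) • J₁ (z₂ n) - z₂ n) - z₁ n) + lam n • b₁ n)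
            (z₂ n + μ n • (((2 : ℝ) • J₂ (z₁ n) - z₁ n) - z₂ n) + lam n • b₂ n)
    rw [comp1, comp2]
  -- apply the master theorem
  obtain ⟨w, hRw, hwconv, hres⟩ := km_main RR hRRne f₀ hf₀ μ hμmem hdiv' c hcsum Z hZrec
  set xbar : H := (2 : ℝ)⁻¹ • (w.fst + w.snd) with hxbar
  -- identify the resolvent values at the fixed point
  have hfstw : (2 : ℝ) • J₁ w.snd - w.snd = w.fst := congrArg (fun q => q.fst) hRw
  have hsndw : (2 : ℝ) • J₂ w.fst - w.fst = w.snd := congrArg (fun q => q.snd) hRw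
  have hJ1w : J₁ w.snd = xbar := by
    have h1 : (2 : ℝ) • J₁ w.snd = w.fst + w.snd := by rw [← hfstw]; abel
    have h2 := congrArg (fun t => (2 : ℝ)⁻¹ • t) h1
    simpa [smul_smul, hxbar] using h2
  have hJ2w : J₂ w.fst = xbar := by
    have h1 : (2 : ℝ) • J₂ w.fst = w.fst + w.snd := by rw [← hsndw]; abel
    have h2 := congrArg (fun t => (2 : ℝ)⁻¹ • t) h1
    simpa [smul_smul, hxbar] using h2
  obtain ⟨u, hu, hwu⟩ := (hJ₁ w.snd xbar).1 hJ1w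
  obtain ⟨v, hv, hwv⟩ := (hJ₂ w.fst xbar).1 hJ2w
  have huv : u + v = 0 := by
    have h1 : (2 * γ) • (u + v) = 0 := by
      rw [smul_add, ← hwu, ← hwv, hxbar]
      module
    rcases smul_eq_zero.1 h1 with h | h
    · exact absurd h (by positivity)
    · exact h
  refine ⟨xbar, ⟨u, hu, v, hv, huv⟩, ?_, ?_⟩
  · -- weak convergence of x n
    intro y
    have t1 : Tendsto (fun n => ⟪z₁ n, y⟫) atTop (𝓝 ⟪w.fst, y⟫) := by
      have := hwconv (km_mk2 y 0)
      have e1 : ∀ n, ⟪Z n, km_mk2 y 0⟫ = ⟪z₁ n, y⟫ + ⟪z₂ n, (0 : H)⟫ := fun n => rfl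
      have e2 : ⟪w, km_mk2 y 0⟫ = ⟪w.fst, y⟫ + ⟪w.snd, (0 : H)⟫ := rfl
      simp only [e1, e2, inner_zero_right, add_zero] at this
      exact this
    have t2 : Tendsto (fun n => ⟪z₂ n, y⟫) atTop (𝓝 ⟪w.snd, y⟫) := by
      have := hwconv (km_mk2 0 y)
      have e1 : ∀ n, ⟪Z n, km_mk2 0 y⟫ = ⟪z₁ n, (0 : H)⟫ + ⟪z₂ n, y⟫ := fun n => rfl
      have e2 : ⟪w, km_mk2 0 y⟫ = ⟪w.fst, (0 : H)⟫ + ⟪w.snd, y⟫ := rfl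
      simp only [e1, e2, inner_zero_right, zero_add] at this
      exact this
    have e3 : ∀ n, ⟪x n, y⟫ = (2 : ℝ)⁻¹ * (⟪z₁ n, y⟫ + ⟪z₂ n, y⟫) := by
      intro n
      rw [hx n, real_inner_smul_left, inner_add_left]
    have e4 : ⟪xbar, y⟫ = (2 : ℝ)⁻¹ * (⟪w.fst, y⟫ + ⟪w.snd, y⟫) := by
      rw [hxbar, real_inner_smul_left, inner_add_left]
    simp only [e3, e4]
    exact ((t1.add t2).const_mul _)
  · -- strong convergence of the increments to 0
    have hxdiff : ∀ n, x (n + 1) - x n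
        = (lam n / 4) • ((RR (Z n) - Z n).fst + (RR (Z n) - Z n).snd)
          + (lam n / 2) • (b₁ n + b₂ n) := by
      intro n
      have c1 : (RR (Z n) - Z n).fst = ((2 : ℝ) • J₁ (z₂ n) - z₂ n) - z₁ n := rfl
      have c2 : (RR (Z n) - Z n).snd = ((2 : ℝ) • J₂ (z₁ n) - z₁ n) - z₂ n := rfl
      rw [c1, c2, hx (n + 1), hz₁ n, hz₂ n, hp₁ n, hp₂ n, hx n]
      module
    have hDto0 : Tendsto (fun n => ‖RR (Z n) - Z n‖) atTop (𝓝 0) := by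
      simpa using hres.norm
    apply squeeze_zero_norm (a := fun n =>
      (3 / 4) * ‖RR (Z n) - Z n‖ + (lam n * ‖b₁ n‖ + lam n * ‖b₂ n‖))
    · intro n
      rw [hxdiff n]
      have h1 : ‖(lam n / 4) • ((RR (Z n) - Z n).fst + (RR (Z n) - Z n).snd)‖
          ≤ (3 / 4) * ‖RR (Z n) - Z n‖ := by
        rw [norm_smul, Real.norm_eq_abs, abs_of_pos (by have := hlam0 n; positivity)]
        have h2 : ‖(RR (Z n) - Z n).fst + (RR (Z n) - Z n).snd‖ ≤ 2 * ‖RR (Z n) - Z n‖ := by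
          refine (norm_add_le _ _).trans ?_
          linarith [km_fst_le (RR (Z n) - Z n), km_snd_le (RR (Z n) - Z n)]
        have h3 := hlam32 n
        have h4 := hlam0 n
        nlinarith [norm_nonneg ((RR (Z n) - Z n).fst + (RR (Z n) - Z n).snd),
          norm_nonneg (RR (Z n) - Z n)]
      have h5 : ‖(lam n / 2) • (b₁ n + b₂ n)‖ ≤ lam n * ‖b₁ n‖ + lam n * ‖b₂ n‖ := by
        rw [norm_smul, Real.norm_eq_abs, abs_of_pos (by have := hlam0 n; positivity)]
        have h6 := norm_add_le (b₁ n) (b₂ n)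
        have h7 := hlam0 n
        nlinarith [norm_nonneg (b₁ n), norm_nonneg (b₂ n)]
      exact (norm_add_le _ _).trans (by linarith)
    · have g1 : Tendsto (fun n => (3 / 4) * ‖RR (Z n) - Z n‖) atTop (𝓝 0) := by
        simpa using hDto0.const_mul (3 / 4)
      have g2 : Tendsto (fun n => lam n * ‖b₁ n‖ + lam n * ‖b₂ n‖) atTop (𝓝 0) := by
        simpa using herr₁.tendsto_atTop_zero.add herr₂.tendsto_atTop_zero
      simpa using g1.add g2
end
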